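/- For all 0 ≤ k ≤ n, all (ε₁,…,ε_k) ∈ {−1,1}^k and all (η₁,…,η_{n−k}) ∈ {−1,1}^{n−k}, one has P(ξ̃¹_1 = ε₁, …, ξ̃¹_k = ε_k, ξ̃²_1 = η₁, …, ξ̃²_{n−k} = η_{n−k}, H_n = k) = p̃₁^I q̃₁^{k−I} p̃₂^J q̃₂^{(n−k)−J} · C(n,k) h₁^k h₂^{n−k}, where p̃_i = p_i/h_i, q̃_i = q_i/h_i, I = #{j ≤ k : ε_j = 1}, J = #{j ≤ n−k : η_j = 1}, and C(n,k) is the binomial coefficient. Consequently, for each 0 ≤ k ≤ n, the random vectors (ξ̃¹_1,…,ξ̃¹_k), (ξ̃²_1,…,ξ̃²_{n−k}) and the event {H_n = k} are mutually independent. -/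

import Mathlib

open MeasureTheory ProbabilityTheory Filter Real Topology
open scoped ENNReal

noncomputable section

/-- Position of the 2D nearest-neighbour walk after `n` steps (started at the origin). -/
def walk2 {Ω : Type*} (ξ : ℕ → Ω → ℤ × ℤ) (n : ℕ) (ω : Ω) : ℤ × ℤ :=
  ∑ k ∈ Finset.range n, ξ k ω

/-- The stopping times `T_n` of the successive moves of the coordinate `proj` of the walk:
`T_0 = 0` and `T_{n+1} = inf {k > T_n : proj(S_k) ≠ proj(S_{k-1})}`. -/
def hitTime {Ω : Type*} (ξ : ℕ → Ω → ℤ × ℤ) (proj : ℤ × ℤ → ℤ) : ℕ → Ω → ℕ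
  | 0, _ => 0
  | n + 1, ω =>
      sInf {k | hitTime ξ proj n ω < k ∧ proj (walk2 ξ k ω) ≠ proj (walk2 ξ (k - 1) ω)}

/-- `S̃_n`: the coordinate `proj` of the walk watched only when it moves. -/
def watched {Ω : Type*} (ξ : ℕ → Ω → ℤ × ℤ) (proj : ℤ × ℤ → ℤ) (n : ℕ) (ω : Ω) : ℤ :=
  proj (walk2 ξ (hitTime ξ proj n ω) ω)

/-- `ξ̃_n = S̃_n - S̃_{n-1}`: the increments of the watched walk. -/
def tilXi {Ω : Type*} (ξ : ℕ → Ω → ℤ × ℤ) (proj : ℤ × ℤ → ℤ) (n : ℕ) (ω : Ω) : ℤ :=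
  watched ξ proj n ω - watched ξ proj (n - 1) ω

/-- `H_n`: the number of horizontal steps among the first `n` steps. -/
def horizSteps {Ω : Type*} (ξ : ℕ → Ω → ℤ × ℤ) (n : ℕ) (ω : Ω) : ℕ :=
  ((Finset.Icc 1 n).filter (fun k => (walk2 ξ k ω).1 ≠ (walk2 ξ (k - 1) ω).1)).card

namespace Stmt6Aux
open Finset

/-! ### Enumeration of a finite set of naturals -/

def en (D : Finset ℕ) (i : ℕ) : ℕ := if h : i < D.card then D.orderEmbOfFin rfl ⟨i, h⟩ else 0

def rank (D : Finset ℕ) (j : ℕ) : ℕ := (D.filter (· < j)).card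

lemma en_mem {D : Finset ℕ} {i : ℕ} (h : i < D.card) : en D i ∈ D := by
  rw [en, dif_pos h]; exact D.orderEmbOfFin_mem rfl _

lemma en_lt_en {D : Finset ℕ} {i j : ℕ} (hij : i < j) (hj : j < D.card) :
    en D i < en D j := by
  rw [en, en, dif_pos hj, dif_pos (hij.trans hj)]
  exact (D.orderEmbOfFin rfl).strictMono (show (⟨i, hij.trans hj⟩ : Fin D.card) < ⟨j, hj⟩ from hij)

lemma en_le_en {D : Finset ℕ} {i j : ℕ} (hij : i ≤ j) (hj : j < D.card) :
    en D i ≤ en D j := by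
  rcases hij.lt_or_eq with h | h
  · exact (en_lt_en h hj).le
  · rw [h]

lemma en_surj {D : Finset ℕ} {j : ℕ} (hj : j ∈ D) : ∃ i, ∃ h : i < D.card, en D i = j := by
  have : j ∈ Set.range (D.orderEmbOfFin rfl) := by
    rw [D.range_orderEmbOfFin rfl]; exact hj
  obtain ⟨⟨i, hi⟩, hij⟩ := this
  exact ⟨i, hi, by rw [en, dif_pos hi]; exact hij⟩

lemma en_inj {D : Finset ℕ} {i j : ℕ} (hi : i < D.card) (hj : j < D.card)
    (h : en D i = en D j) : i = j := by
  rcases lt_trichotomy i j with hlt | he | hlt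
  · exact absurd h (en_lt_en hlt hj).ne
  · exact he
  · exact absurd h.symm (en_lt_en hlt hi).ne

lemma image_en (D : Finset ℕ) : (range D.card).image (en D) = D := by
  ext j
  simp only [mem_image, mem_range]
  constructor
  · rintro ⟨i, hi, rfl⟩; exact en_mem hi
  · intro hj; obtain ⟨i, hi, h⟩ := en_surj hj; exact ⟨i, hi, h⟩

lemma filter_lt_en {D : Finset ℕ} {i : ℕ} (hi : i < D.card) :
    D.filter (· < en D i) = (range i).image (en D) := by
  ext j
  simp only [mem_filter, mem_image, mem_range]
  constructor
  · rintro ⟨hj, hlt⟩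
    obtain ⟨m, hm, rfl⟩ := en_surj hj
    refine ⟨m, ?_, rfl⟩
    by_contra hmi
    exact absurd (en_le_en (not_lt.1 hmi) hm) (not_le.2 hlt)
  · rintro ⟨m, hm, rfl⟩
    exact ⟨en_mem (hm.trans hi), en_lt_en hm hi⟩

lemma rank_en {D : Finset ℕ} {i : ℕ} (hi : i < D.card) : rank D (en D i) = i := by
  rw [rank, filter_lt_en hi, card_image_of_injOn, card_range]
  intro a ha b hb hab
  exact en_inj ((mem_range.1 ha).trans hi) ((mem_range.1 hb).trans hi) hab

lemma rank_lt_card {D : Finset ℕ} {j : ℕ} (hj : j ∈ D) : rank D j < D.card := by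
  obtain ⟨i, hi, rfl⟩ := en_surj hj
  rw [rank_en hi]; exact hi

lemma en_rank {D : Finset ℕ} {j : ℕ} (hj : j ∈ D) : en D (rank D j) = j := by
  obtain ⟨i, hi, rfl⟩ := en_surj hj
  rw [rank_en hi]

lemma en_zero_le {D : Finset ℕ} {j : ℕ} (hj : j ∈ D) : en D 0 ≤ j := by
  obtain ⟨i, hi, rfl⟩ := en_surj hj
  exact en_le_en (Nat.zero_le i) hi

lemma en_succ_le {D : Finset ℕ} {i j : ℕ} (hj : j ∈ D) (hlt : en D i < j)
    (hi : i + 1 < D.card) : en D (i + 1) ≤ j := by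
  obtain ⟨m, hm, rfl⟩ := en_surj hj
  refine en_le_en ?_ hm
  by_contra hmi
  exact absurd (en_le_en (Nat.lt_succ_iff.1 (not_le.1 hmi)) (Nat.lt_of_succ_lt hi)) (not_le.2 hlt)

/-! ### Walk lemmas -/

variable {Ω : Type*} {ξ : ℕ → Ω → ℤ × ℤ} {ω : Ω}

lemma walk2_succ (ξ : ℕ → Ω → ℤ × ℤ) (t : ℕ) (ω : Ω) :
    walk2 ξ (t + 1) ω = walk2 ξ t ω + ξ t ω := Finset.sum_range_succ _ _

lemma proj_zero {proj : ℤ × ℤ → ℤ} (hadd : ∀ a b, proj (a + b) = proj a + proj b) :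
    proj 0 = 0 := by
  have := hadd 0 0
  rw [add_zero] at this
  linarith [this]

lemma proj_walk2 {proj : ℤ × ℤ → ℤ} (hadd : ∀ a b, proj (a + b) = proj a + proj b)
    (t : ℕ) : proj (walk2 ξ t ω) = ∑ j ∈ range t, proj (ξ j ω) := by
  induction t with
  | zero => simpa [walk2] using proj_zero hadd
  | succ t ih => rw [walk2_succ, hadd, ih, Finset.sum_range_succ]

lemma proj_walk2_sub_one {proj : ℤ × ℤ → ℤ} (hadd : ∀ a b, proj (a + b) = proj a + proj b)
    {t : ℕ} (ht : 1 ≤ t) :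
    proj (walk2 ξ t ω) = proj (walk2 ξ (t - 1) ω) + proj (ξ (t - 1) ω) := by
  obtain ⟨s, rfl⟩ := Nat.exists_eq_add_of_le ht
  simp only [Nat.add_sub_cancel_left] at *
  rw [show 1 + s = s + 1 by ring, walk2_succ, hadd]

lemma move_iff {proj : ℤ × ℤ → ℤ} (hadd : ∀ a b, proj (a + b) = proj a + proj b)
    {t : ℕ} (ht : 1 ≤ t) :
    (proj (walk2 ξ t ω) ≠ proj (walk2 ξ (t - 1) ω)) ↔ proj (ξ (t - 1) ω) ≠ 0 := by
  rw [proj_walk2_sub_one hadd ht]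
  omega

/-! ### hitTime / watched / tilXi in terms of the moving-step enumeration -/

lemma fst_add : ∀ a b : ℤ × ℤ, (a + b).1 = a.1 + b.1 := fun _ _ => rfl
lemma snd_add : ∀ a b : ℤ × ℤ, (a + b).2 = a.2 + b.2 := fun _ _ => rfl

lemma hitTime_eq {proj : ℤ × ℤ → ℤ} (hadd : ∀ a b, proj (a + b) = proj a + proj b)
    {N : ℕ} (D : Finset ℕ) (hD : D = (range N).filter (fun j => proj (ξ j ω) ≠ 0)) :
    ∀ i ≤ D.card, hitTime ξ proj i ω = if i = 0 then 0 else en D (i - 1) + 1 := by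
  have hmemD : ∀ j, j ∈ D ↔ j < N ∧ proj (ξ j ω) ≠ 0 := by
    intro j; rw [hD]; simp
  intro i
  induction i with
  | zero => intro _; simp [hitTime]
  | succ b ih =>
    intro hb1
    have hbcard : b < D.card := hb1
    have ihb := ih hbcard.le
    have henN : en D b < N := ((hmemD _).1 (en_mem hbcard)).1
    have hmem : hitTime ξ proj b ω < en D b + 1 ∧
        proj (walk2 ξ (en D b + 1) ω) ≠ proj (walk2 ξ (en D b + 1 - 1) ω) := by
      constructor
      · rw [ihb]
        rcases Nat.eq_zero_or_pos b with rfl | hbpos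
        · simp
        · rw [if_neg (by omega)]
          have := en_lt_en (show b - 1 < b by omega) hbcard
          omega
      · rw [move_iff hadd (by omega)]
        simpa using ((hmemD _).1 (en_mem hbcard)).2
    have hunf : hitTime ξ proj (b + 1) ω =
        sInf {t | hitTime ξ proj b ω < t ∧
          proj (walk2 ξ t ω) ≠ proj (walk2 ξ (t - 1) ω)} := rfl
    rw [if_neg (by omega), Nat.add_sub_cancel, hunf]
    apply le_antisymm
    · exact Nat.sInf_le hmem
    · refine le_csInf ⟨_, hmem⟩ ?_
      rintro t ⟨hgt, hmv⟩
      have ht1 : 1 ≤ t := by omega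
      rcases le_or_gt t N with htN | htN
      · have hne := (move_iff hadd ht1).1 hmv
        have htD : t - 1 ∈ D := (hmemD _).2 ⟨by omega, hne⟩
        cases b with
        | zero => have := en_zero_le htD; omega
        | succ c =>
          rw [ihb, if_neg (by omega), Nat.add_sub_cancel] at hgt
          have := en_succ_le htD (by omega) hbcard
          omega
      · omega

lemma watched_eq {proj : ℤ × ℤ → ℤ} (hadd : ∀ a b, proj (a + b) = proj a + proj b)
    {N : ℕ} (D : Finset ℕ) (hD : D = (range N).filter (fun j => proj (ξ j ω) ≠ 0)) :
    ∀ i ≤ D.card, watched ξ proj i ω = ∑ m ∈ range i, proj (ξ (en D m) ω) := by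
  have hmemD : ∀ j, j ∈ D ↔ j < N ∧ proj (ξ j ω) ≠ 0 := by
    intro j; rw [hD]; simp
  intro i hi
  rcases Nat.eq_zero_or_pos i with rfl | hpos
  · have h0 := hitTime_eq hadd D hD 0 (Nat.zero_le _)
    rw [if_pos rfl] at h0
    simp [watched, h0, walk2, proj_zero hadd]
  · have hht := hitTime_eq hadd D hD i hi
    rw [if_neg (by omega)] at hht
    have hi1 : i - 1 < D.card := by omega
    rw [watched, hht, proj_walk2 hadd]
    have hsub : (range i).image (en D) ⊆ range (en D (i - 1) + 1) := by
      intro j hj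
      obtain ⟨m, hm, rfl⟩ := mem_image.1 hj
      rw [mem_range] at hm ⊢
      have := en_le_en (show m ≤ i - 1 by omega) hi1
      omega
    have hzero : ∀ j ∈ range (en D (i - 1) + 1), j ∉ (range i).image (en D) →
        proj (ξ j ω) = 0 := by
      intro j hj hnj
      by_contra hne
      have hjN : j < N := by
        rw [mem_range] at hj
        have := ((hmemD _).1 (en_mem hi1)).1
        omega
      have hjD : j ∈ D := (hmemD _).2 ⟨hjN, hne⟩
      obtain ⟨m, hm, rfl⟩ := en_surj hjD
      apply hnj
      rw [mem_image]
      refine ⟨m, mem_range.2 ?_, rfl⟩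
      by_contra hmi
      have h1 : i - 1 < m := by omega
      have := en_lt_en h1 hm
      rw [mem_range] at hj
      omega
    rw [← Finset.sum_subset hsub hzero, Finset.sum_image]
    intro a ha b hb hab
    exact en_inj ((mem_range.1 ha).trans_le hi) ((mem_range.1 hb).trans_le hi) hab

lemma tilXi_eq {proj : ℤ × ℤ → ℤ} (hadd : ∀ a b, proj (a + b) = proj a + proj b)
    {N : ℕ} (D : Finset ℕ) (hD : D = (range N).filter (fun j => proj (ξ j ω) ≠ 0)) :
    ∀ i < D.card, tilXi ξ proj (i + 1) ω = proj (ξ (en D i) ω) := by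
  intro i hi
  rw [tilXi, Nat.add_sub_cancel, watched_eq hadd D hD (i+1) hi, watched_eq hadd D hD i hi.le,
    Finset.sum_range_succ]
  ring

lemma horizSteps_eq (ξ : ℕ → Ω → ℤ × ℤ) (ω : Ω) (N : ℕ) :
    horizSteps ξ N ω = ((range N).filter (fun j => (ξ j ω).1 ≠ 0)).card := by
  rw [horizSteps,
    show (Finset.Icc 1 N).filter (fun t => (walk2 ξ t ω).1 ≠ (walk2 ξ (t - 1) ω).1)
      = ((range N).filter (fun j => (ξ j ω).1 ≠ 0)).image (· + 1) from ?_]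
  · rw [card_image_of_injective _ (fun a b h => by omega)]
  · ext t
    simp only [mem_filter, mem_image, mem_Icc, mem_range]
    constructor
    · rintro ⟨⟨h1, h2⟩, hmv⟩
      have := (move_iff (proj := Prod.fst) fst_add h1).1 hmv
      exact ⟨t - 1, ⟨by omega, this⟩, by omega⟩
    · rintro ⟨j, ⟨hj, hne⟩, rfl⟩
      refine ⟨⟨by omega, by omega⟩, ?_⟩
      rw [move_iff (proj := Prod.fst) fst_add (by omega : 1 ≤ j + 1)]
      simpa using hne

/-! ### Measure-theoretic toolkit -/

def VS : Set (ℤ × ℤ) := {(1,0), (-1,0), (0,1), (0,-1)}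

def stepw (p₁ q₁ p₂ q₂ : ℝ) (v : ℤ × ℤ) : ℝ :=
  if v.1 = 1 then p₁ else if v.1 = -1 then q₁ else if v.2 = 1 then p₂ else q₂

def Gset (ξ : ℕ → Ω → ℤ × ℤ) (N : ℕ) : Set Ω := {ω | ∀ j < N, ξ j ω ∈ VS}

def Cyl (ξ : ℕ → Ω → ℤ × ℤ) (N : ℕ) (g : ℕ → ℤ × ℤ) : Set Ω := {ω | ∀ j < N, ξ j ω = g j}

def Dset (ξ : ℕ → Ω → ℤ × ℤ) (N : ℕ) (ω : Ω) : Finset ℕ :=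
  (range N).filter (fun j => (ξ j ω).1 ≠ 0)

lemma all_meas (S : Set (ℤ × ℤ)) : MeasurableSet S := S.to_countable.measurableSet

section Prob
variable {Ω : Type*} [MeasurableSpace Ω] {P : Measure Ω} [IsProbabilityMeasure P]
  {ξ : ℕ → Ω → ℤ × ℤ} {p₁ q₁ p₂ q₂ : ℝ}

lemma stepw_nonneg (hp₁ : 0 < p₁) (hq₁ : 0 < q₁) (hp₂ : 0 < p₂) (hq₂ : 0 < q₂) (v : ℤ × ℤ) :
    0 ≤ stepw p₁ q₁ p₂ q₂ v := by
  unfold stepw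
  split_ifs <;> positivity

lemma cyl_eq (N : ℕ) (g : ℕ → ℤ × ℤ) :
    Cyl ξ N g = ⋂ j ∈ range N, ξ j ⁻¹' {g j} := by
  ext ω
  simp [Cyl, Set.mem_iInter]

lemma cyl_meas (hmeas : ∀ k, Measurable (ξ k)) (N : ℕ) (g : ℕ → ℤ × ℤ) :
    MeasurableSet (Cyl ξ N g) := by
  rw [cyl_eq]
  exact MeasurableSet.biInter (Set.to_countable _) fun j _ => hmeas j (all_meas _)

lemma prob_cyl (hindep : iIndepFun ξ P) (N : ℕ) (g : ℕ → ℤ × ℤ) :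
    P (Cyl ξ N g) = ∏ j ∈ range N, P {ω | ξ j ω = g j} := by
  rw [cyl_eq]
  exact hindep.meas_biInter fun j _ => ⟨{g j}, all_meas _, rfl⟩

lemma step_prob
    (hd₁ : ∀ k, P {ω | ξ k ω = (1, 0)} = ENNReal.ofReal p₁)
    (hd₂ : ∀ k, P {ω | ξ k ω = (-1, 0)} = ENNReal.ofReal q₁)
    (hd₃ : ∀ k, P {ω | ξ k ω = (0, 1)} = ENNReal.ofReal p₂)
    (hd₄ : ∀ k, P {ω | ξ k ω = (0, -1)} = ENNReal.ofReal q₂)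
    (j : ℕ) {v : ℤ × ℤ} (hv : v ∈ VS) :
    P {ω | ξ j ω = v} = ENNReal.ofReal (stepw p₁ q₁ p₂ q₂ v) := by
  rcases hv with h | h | h | h <;> subst h <;>
    simp [stepw, hd₁ j, hd₂ j, hd₃ j, hd₄ j]

lemma vs_prob
    (hmeas : ∀ k, Measurable (ξ k))
    (hsum : p₁ + q₁ + p₂ + q₂ = 1)
    (hp₁ : 0 < p₁) (hq₁ : 0 < q₁) (hp₂ : 0 < p₂) (hq₂ : 0 < q₂)
    (hd₁ : ∀ k, P {ω | ξ k ω = (1, 0)} = ENNReal.ofReal p₁)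
    (hd₂ : ∀ k, P {ω | ξ k ω = (-1, 0)} = ENNReal.ofReal q₁)
    (hd₃ : ∀ k, P {ω | ξ k ω = (0, 1)} = ENNReal.ofReal p₂)
    (hd₄ : ∀ k, P {ω | ξ k ω = (0, -1)} = ENNReal.ofReal q₂)
    (j : ℕ) : P (ξ j ⁻¹' VS) = 1 := by
  have hdisj : ∀ v w : ℤ × ℤ, v ≠ w → Disjoint (ξ j ⁻¹' {v}) (ξ j ⁻¹' {w}) := by
    intro v w hvw
    refine Set.disjoint_left.2 fun ω hv hw => hvw ?_
    rw [Set.mem_preimage, Set.mem_singleton_iff] at hv hw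
    rw [← hv, hw]
  have hm : ∀ v : ℤ × ℤ, MeasurableSet (ξ j ⁻¹' {v}) := fun v => hmeas j (all_meas _)
  have hsplit : ξ j ⁻¹' VS = (ξ j ⁻¹' {(1,0)}) ∪ ((ξ j ⁻¹' {(-1,0)}) ∪
      ((ξ j ⁻¹' {(0,1)}) ∪ (ξ j ⁻¹' {(0,-1)}))) := by
    ext ω; simp [VS]
  have hps : ∀ v : ℤ × ℤ, P (ξ j ⁻¹' {v}) = P {ω | ξ j ω = v} := fun v => rfl
  rw [hsplit, measure_union _ ((hm _).union ((hm _).union (hm _))),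
      measure_union _ ((hm _).union (hm _)), measure_union _ (hm _)]
  · rw [hps, hps, hps, hps, hd₁ j, hd₂ j, hd₃ j, hd₄ j,
      ← ENNReal.ofReal_add hp₂.le hq₂.le, ← ENNReal.ofReal_add hq₁.le (by positivity),
      ← ENNReal.ofReal_add hp₁.le (by positivity)]
    rw [show p₁ + (q₁ + (p₂ + q₂)) = 1 by linarith]
    exact ENNReal.ofReal_one
  · exact hdisj _ _ (by decide)
  · exact Set.disjoint_union_right.2 ⟨hdisj _ _ (by decide), hdisj _ _ (by decide)⟩
  · exact Set.disjoint_union_right.2 ⟨hdisj _ _ (by decide),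
      Set.disjoint_union_right.2 ⟨hdisj _ _ (by decide), hdisj _ _ (by decide)⟩⟩

lemma null_not_vs
    (hmeas : ∀ k, Measurable (ξ k))
    (hsum : p₁ + q₁ + p₂ + q₂ = 1)
    (hp₁ : 0 < p₁) (hq₁ : 0 < q₁) (hp₂ : 0 < p₂) (hq₂ : 0 < q₂)
    (hd₁ : ∀ k, P {ω | ξ k ω = (1, 0)} = ENNReal.ofReal p₁)
    (hd₂ : ∀ k, P {ω | ξ k ω = (-1, 0)} = ENNReal.ofReal q₁)
    (hd₃ : ∀ k, P {ω | ξ k ω = (0, 1)} = ENNReal.ofReal p₂)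
    (hd₄ : ∀ k, P {ω | ξ k ω = (0, -1)} = ENNReal.ofReal q₂)
    (j : ℕ) : P {ω | ξ j ω ∉ VS} = 0 := by
  have : {ω | ξ j ω ∉ VS} = (ξ j ⁻¹' VS)ᶜ := rfl
  rw [this, measure_compl (hmeas j (all_meas _)) (measure_ne_top _ _),
    vs_prob hmeas hsum hp₁ hq₁ hp₂ hq₂ hd₁ hd₂ hd₃ hd₄ j, measure_univ, tsub_self]

lemma inter_conull {X Y : Set Ω} (hY : P Yᶜ = 0) : P (X ∩ Y) = P X := by
  refine le_antisymm (measure_mono Set.inter_subset_left) ?_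
  calc P X ≤ P ((X ∩ Y) ∪ (X ∩ Yᶜ)) := by
        refine measure_mono fun ω hω => ?_
        by_cases h : ω ∈ Y
        · exact Or.inl ⟨hω, h⟩
        · exact Or.inr ⟨hω, h⟩
    _ ≤ P (X ∩ Y) + P (X ∩ Yᶜ) := measure_union_le _ _
    _ ≤ P (X ∩ Y) + P Yᶜ := add_le_add le_rfl (measure_mono Set.inter_subset_right)
    _ = P (X ∩ Y) := by rw [hY, add_zero]

lemma union_cyl (hmeas : ∀ k, Measurable (ξ k)) {ι : Type*} (S : Finset ι)
    (f : ι → ℕ → ℤ × ℤ) (N : ℕ)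
    (hinj : ∀ a ∈ S, ∀ b ∈ S, (∀ j < N, f a j = f b j) → a = b) :
    P (⋃ a ∈ S, Cyl ξ N (f a)) = ∑ a ∈ S, P (Cyl ξ N (f a)) := by
  refine measure_biUnion_finset ?_ fun a _ => cyl_meas hmeas N (f a)
  intro a ha b hb hab
  refine Set.disjoint_left.2 fun ω hωa hωb => hab ?_
  exact hinj a ha b hb fun j hj => ((hωa j hj).symm.trans (hωb j hj))

lemma prob_cyl_ofReal (hindep : iIndepFun ξ P)
    (hp₁ : 0 < p₁) (hq₁ : 0 < q₁) (hp₂ : 0 < p₂) (hq₂ : 0 < q₂)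
    (hd₁ : ∀ k, P {ω | ξ k ω = (1, 0)} = ENNReal.ofReal p₁)
    (hd₂ : ∀ k, P {ω | ξ k ω = (-1, 0)} = ENNReal.ofReal q₁)
    (hd₃ : ∀ k, P {ω | ξ k ω = (0, 1)} = ENNReal.ofReal p₂)
    (hd₄ : ∀ k, P {ω | ξ k ω = (0, -1)} = ENNReal.ofReal q₂)
    (N : ℕ) (g : ℕ → ℤ × ℤ) (hg : ∀ j < N, g j ∈ VS) :
    P (Cyl ξ N g) = ENNReal.ofReal (∏ j ∈ range N, stepw p₁ q₁ p₂ q₂ (g j)) := by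
  rw [prob_cyl hindep N g,
    ENNReal.ofReal_prod_of_nonneg fun j _ => stepw_nonneg hp₁ hq₁ hp₂ hq₂ (g j)]
  exact Finset.prod_congr rfl fun j hj =>
    step_prob hd₁ hd₂ hd₃ hd₄ j (hg j (mem_range.1 hj))

lemma null_GsetC
    (hmeas : ∀ k, Measurable (ξ k))
    (hsum : p₁ + q₁ + p₂ + q₂ = 1)
    (hp₁ : 0 < p₁) (hq₁ : 0 < q₁) (hp₂ : 0 < p₂) (hq₂ : 0 < q₂)
    (hd₁ : ∀ k, P {ω | ξ k ω = (1, 0)} = ENNReal.ofReal p₁)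
    (hd₂ : ∀ k, P {ω | ξ k ω = (-1, 0)} = ENNReal.ofReal q₁)
    (hd₃ : ∀ k, P {ω | ξ k ω = (0, 1)} = ENNReal.ofReal p₂)
    (hd₄ : ∀ k, P {ω | ξ k ω = (0, -1)} = ENNReal.ofReal q₂)
    (N : ℕ) : P (Gset ξ N)ᶜ = 0 := by
  refine measure_mono_null (show (Gset ξ N)ᶜ ⊆ ⋃ j ∈ range N, {ω | ξ j ω ∉ VS} from ?_) ?_
  · intro ω hω
    simp only [Gset, Set.mem_compl_iff, Set.mem_setOf_eq, not_forall] at hω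
    obtain ⟨j, hj, hnot⟩ := hω
    exact Set.mem_biUnion (mem_range.2 hj) hnot
  · refine (measure_biUnion_null_iff (Set.to_countable _)).2 fun j _ =>
      null_not_vs hmeas hsum hp₁ hq₁ hp₂ hq₂ hd₁ hd₂ hd₃ hd₄ j

lemma null_BallC
    (hmeas : ∀ k, Measurable (ξ k))
    (hsum : p₁ + q₁ + p₂ + q₂ = 1)
    (hp₁ : 0 < p₁) (hq₁ : 0 < q₁) (hp₂ : 0 < p₂) (hq₂ : 0 < q₂)
    (hd₁ : ∀ k, P {ω | ξ k ω = (1, 0)} = ENNReal.ofReal p₁)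
    (hd₂ : ∀ k, P {ω | ξ k ω = (-1, 0)} = ENNReal.ofReal q₁)
    (hd₃ : ∀ k, P {ω | ξ k ω = (0, 1)} = ENNReal.ofReal p₂)
    (hd₄ : ∀ k, P {ω | ξ k ω = (0, -1)} = ENNReal.ofReal q₂) :
    P {ω | ∀ j, ξ j ω ∈ VS}ᶜ = 0 := by
  refine measure_mono_null (show _ ⊆ ⋃ j : ℕ, {ω | ξ j ω ∉ VS} from ?_) ?_
  · intro ω hω
    simp only [Set.mem_compl_iff, Set.mem_setOf_eq, not_forall] at hω
    obtain ⟨j, hnot⟩ := hω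
    exact Set.mem_iUnion.2 ⟨j, hnot⟩
  · exact measure_iUnion_null fun j =>
      null_not_vs hmeas hsum hp₁ hq₁ hp₂ hq₂ hd₁ hd₂ hd₃ hd₄ j

end Prob

/-! ### sign characterization and vertical filter -/

lemma vs_cases {v : ℤ × ℤ} (h : v ∈ VS) :
    (v.2 = 0 ∧ (v.1 = 1 ∨ v.1 = -1)) ∨ (v.1 = 0 ∧ (v.2 = 1 ∨ v.2 = -1)) := by
  simp only [VS, Set.mem_insert_iff, Set.mem_singleton_iff] at h
  rcases h with h | h | h | h <;> subst h <;> simp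

lemma vs_snd_iff {v : ℤ × ℤ} (h : v ∈ VS) : v.2 ≠ 0 ↔ v.1 = 0 := by
  rcases vs_cases h with ⟨h1, h2 | h2⟩ | ⟨h1, h2 | h2⟩ <;>
    simp [h1, h2] <;> omega

section Det2
variable {Ω : Type*} {ξ : ℕ → Ω → ℤ × ℤ} {ω : Ω} {N : ℕ}

lemma Eset_vert (hG : ∀ j < N, ξ j ω ∈ VS) :
    (range N).filter (fun j => (ξ j ω).2 ≠ 0) = range N \ Dset ξ N ω := by
  ext j
  simp only [Dset, mem_filter, Finset.mem_sdiff, mem_range, not_and]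
  constructor
  · rintro ⟨hj, h2⟩
    exact ⟨hj, fun hj2 => by rw [(vs_snd_iff (hG j hj)).1 h2]; simp⟩
  · rintro ⟨hj, h2⟩
    refine ⟨hj, (vs_snd_iff (hG j hj)).2 ?_⟩
    by_contra hne
    exact h2 hj hne

lemma Dset_subset : Dset ξ N ω ⊆ range N := filter_subset _ _

lemma card_vert (hG : ∀ j < N, ξ j ω ∈ VS) :
    ((range N).filter (fun j => (ξ j ω).2 ≠ 0)).card = N - (Dset ξ N ω).card := by
  rw [Eset_vert hG, card_sdiff_of_subset Dset_subset, card_range]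

end Det2

/-! ### the canonical cylinder function -/

def gfun (n k : ℕ) (e : Fin k → ℤ) (f : Fin (n - k) → ℤ) (E : Finset ℕ) (j : ℕ) : ℤ × ℤ :=
  if j ∈ E then (if h : rank E j < k then (e ⟨rank E j, h⟩, 0) else (1, 0))
  else (if h : rank (range n \ E) j < n - k then (0, f ⟨rank (range n \ E) j, h⟩) else (0, 1))

lemma gfun_mem_vs {n k : ℕ} {e : Fin k → ℤ} {f : Fin (n - k) → ℤ} {E : Finset ℕ}
    (he : ∀ i, e i = 1 ∨ e i = -1) (hf : ∀ i, f i = 1 ∨ f i = -1) (j : ℕ) :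
    gfun n k e f E j ∈ VS := by
  unfold gfun
  split_ifs with h1 h2 h3
  · rcases he ⟨rank E j, h2⟩ with h | h <;> rw [h] <;> simp [VS]
  · simp [VS]
  · rcases hf ⟨rank (range n \ E) j, h3⟩ with h | h <;> rw [h] <;> simp [VS]
  · simp [VS]

lemma gfun_fst_ne {n k : ℕ} {e : Fin k → ℤ} {f : Fin (n - k) → ℤ} {E : Finset ℕ}
    (he : ∀ i, e i = 1 ∨ e i = -1) (j : ℕ) :
    (gfun n k e f E j).1 ≠ 0 ↔ j ∈ E := by
  unfold gfun
  split_ifs with h1 h2 h3 <;> simp [h1]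
  · rcases he ⟨rank E j, h2⟩ with h | h <;> rw [h] <;> omega

/-! ### reindexing a product over E by the enumeration -/

lemma prod_E_eq {E : Finset ℕ} {k : ℕ} (hEk : E.card = k) {M : Type*} [CommMonoid M]
    (F : ℕ → M) (G : Fin k → M)
    (hF : ∀ i (h : i < k), F (en E i) = G ⟨i, h⟩) :
    ∏ j ∈ E, F j = ∏ i : Fin k, G i := by
  conv_lhs => rw [← image_en E]
  rw [Finset.prod_image (fun a ha b hb hab =>
    en_inj (mem_range.1 ha) (mem_range.1 hb) hab), hEk]
  rw [← Fin.prod_univ_eq_prod_range (fun i => F (en E i)) k]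
  exact Finset.prod_congr rfl fun i _ => by rw [hF i i.isLt]

/-! ### the core event decomposition -/

section Core
variable {Ω : Type*} [MeasurableSpace Ω] {P : Measure Ω} [IsProbabilityMeasure P]
  {ξ : ℕ → Ω → ℤ × ℤ} {p₁ q₁ p₂ q₂ : ℝ}

lemma bridge_fst {ω : Ω} {n : ℕ} (i : ℕ) (hi : i < (Dset ξ n ω).card) :
    tilXi ξ Prod.fst (i + 1) ω = (ξ (en (Dset ξ n ω) i) ω).1 :=
  tilXi_eq fst_add (Dset ξ n ω) rfl i hi

lemma bridge_snd {ω : Ω} {n : ℕ} (i : ℕ)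
    (hi : i < ((range n).filter (fun j => (ξ j ω).2 ≠ 0)).card) :
    tilXi ξ Prod.snd (i + 1) ω =
      (ξ (en ((range n).filter (fun j => (ξ j ω).2 ≠ 0)) i) ω).2 :=
  tilXi_eq snd_add _ rfl i hi

lemma core_set_eq (n k : ℕ) (hk : k ≤ n)
    (S_A : Finset (Fin k → ℤ)) (hSA : ∀ e ∈ S_A, ∀ i, e i = 1 ∨ e i = -1)
    (S_B : Finset (Fin (n - k) → ℤ)) (hSB : ∀ f ∈ S_B, ∀ i, f i = 1 ∨ f i = -1) :
    {ω | (fun j : Fin k => tilXi ξ Prod.fst ((j : ℕ) + 1) ω) ∈ S_A ∧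
         (fun j : Fin (n - k) => tilXi ξ Prod.snd ((j : ℕ) + 1) ω) ∈ S_B ∧
         horizSteps ξ n ω = k} ∩ Gset ξ n
    = ⋃ t ∈ (S_A ×ˢ S_B) ×ˢ (range n).powersetCard k,
        Cyl ξ n (fun j => gfun n k t.1.1 t.1.2 t.2 j) := by
  ext ω
  simp only [Set.mem_inter_iff, Set.mem_setOf_eq, Set.mem_iUnion, Finset.mem_product,
    Finset.mem_powersetCard, exists_prop]
  constructor
  · rintro ⟨⟨hA, hB, hH⟩, hG⟩
    have hG' : ∀ j < n, ξ j ω ∈ VS := hG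
    have hDcard : (Dset ξ n ω).card = k := by
      rw [horizSteps_eq] at hH; exact hH
    have hE' : (range n).filter (fun j => (ξ j ω).2 ≠ 0) = range n \ Dset ξ n ω :=
      Eset_vert hG'
    have hE'card : ((range n).filter (fun j => (ξ j ω).2 ≠ 0)).card = n - k := by
      rw [hE', card_sdiff_of_subset Dset_subset, card_range, hDcard]
    refine ⟨((fun j : Fin k => tilXi ξ Prod.fst ((j : ℕ) + 1) ω,
             fun j : Fin (n - k) => tilXi ξ Prod.snd ((j : ℕ) + 1) ω), Dset ξ n ω),
           ⟨⟨hA, hB⟩, Dset_subset, hDcard⟩, ?_⟩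
    intro j hj
    dsimp only [gfun]
    by_cases hjE : j ∈ Dset ξ n ω
    · rw [if_pos hjE]
      have hrk : rank (Dset ξ n ω) j < k := hDcard ▸ rank_lt_card hjE
      rw [dif_pos hrk]
      have h1 : (ξ j ω).1 ≠ 0 := by
        have := (mem_filter.1 hjE).2; exact this
      have h2 : (ξ j ω).2 = 0 := by
        rcases vs_cases (hG' j hj) with ⟨h2, _⟩ | ⟨h1', _⟩
        · exact h2
        · exact absurd h1' h1
      have hb := bridge_fst (ξ := ξ) (rank (Dset ξ n ω) j) (hDcard ▸ hrk)
      rw [en_rank hjE] at hb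
      refine Prod.ext ?_ ?_
      · exact hb.symm
      · exact h2
    · rw [if_neg hjE]
      have h1 : (ξ j ω).1 = 0 := by
        by_contra h1
        exact hjE (mem_filter.2 ⟨mem_range.2 hj, h1⟩)
      have h2 : (ξ j ω).2 ≠ 0 := (vs_snd_iff (hG' j hj)).2 h1
      have hjE' : j ∈ (range n).filter (fun j => (ξ j ω).2 ≠ 0) :=
        mem_filter.2 ⟨mem_range.2 hj, h2⟩
      have hrk : rank ((range n).filter (fun j => (ξ j ω).2 ≠ 0)) j < n - k :=
        hE'card ▸ rank_lt_card hjE'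
      have hb := bridge_snd (ξ := ξ) (rank ((range n).filter (fun j => (ξ j ω).2 ≠ 0)) j)
        (hE'card ▸ hrk)
      rw [en_rank hjE'] at hb
      rw [← hE']
      rw [dif_pos hrk]
      refine Prod.ext ?_ ?_
      · exact h1
      · exact hb.symm
  · rintro ⟨⟨⟨e, f⟩, E⟩, ⟨⟨heS, hfS⟩, hEsub, hEcard⟩, hcyl⟩
    have he := hSA e heS
    have hf := hSB f hfS
    have hG : ∀ j < n, ξ j ω ∈ VS := fun j hj => by
      rw [hcyl j hj]; exact gfun_mem_vs he hf j
    have hDE : Dset ξ n ω = E := by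
      ext j
      simp only [Dset, mem_filter, mem_range]
      constructor
      · rintro ⟨hj, h1⟩
        rw [hcyl j hj] at h1
        exact (gfun_fst_ne he j).1 h1
      · intro hjE
        have hj : j < n := mem_range.1 (hEsub hjE)
        refine ⟨hj, ?_⟩
        rw [hcyl j hj]
        exact (gfun_fst_ne he j).2 hjE
    have hE'1 : (range n).filter (fun j => (ξ j ω).2 ≠ 0) = range n \ E := by
      rw [Eset_vert hG, hDE]
    have hE'card : (range n \ E).card = n - k := by
      rw [card_sdiff_of_subset hEsub, card_range, hEcard]
    refine ⟨⟨?_, ?_, ?_⟩, hG⟩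
    · have hvA : (fun j : Fin k => tilXi ξ Prod.fst ((j : ℕ) + 1) ω) = e := by
        funext i
        have hik : (i : ℕ) < (Dset ξ n ω).card := by
          rw [hDE, hEcard]; exact i.isLt
        rw [bridge_fst (ξ := ξ) i hik, hDE]
        have hmem : en E (i : ℕ) ∈ E := en_mem (by rw [hEcard]; exact i.isLt)
        have hlt : en E (i : ℕ) < n := mem_range.1 (hEsub hmem)
        rw [hcyl _ hlt]
        dsimp only [gfun]
        rw [if_pos hmem]
        have hri : rank E (en E (i : ℕ)) = (i : ℕ) :=
          rank_en (by rw [hEcard]; exact i.isLt)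
        simp only [hri, i.isLt, dif_pos]
      rw [hvA]; exact heS
    · have hvB : (fun j : Fin (n - k) => tilXi ξ Prod.snd ((j : ℕ) + 1) ω) = f := by
        funext i
        have hik : (i : ℕ) < ((range n).filter (fun j => (ξ j ω).2 ≠ 0)).card := by
          rw [hE'1, hE'card]; exact i.isLt
        rw [bridge_snd (ξ := ξ) i hik, hE'1]
        have hmem : en (range n \ E) (i : ℕ) ∈ range n \ E :=
          en_mem (by rw [hE'card]; exact i.isLt)
        have hlt : en (range n \ E) (i : ℕ) < n := mem_range.1 (mem_sdiff.1 hmem).1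
        rw [hcyl _ hlt]
        dsimp only [gfun]
        rw [if_neg (mem_sdiff.1 hmem).2]
        have hri : rank (range n \ E) (en (range n \ E) (i : ℕ)) = (i : ℕ) :=
          rank_en (by rw [hE'card]; exact i.isLt)
        simp only [hri, i.isLt, dif_pos]
      rw [hvB]; exact hfS
    · rw [horizSteps_eq]
      have : Dset ξ n ω = (range n).filter (fun j => (ξ j ω).1 ≠ 0) := rfl
      rw [← this, hDE, hEcard]

lemma stepw_horiz {v : ℤ} (hv : v = 1 ∨ v = -1) :
    stepw p₁ q₁ p₂ q₂ (v, 0) = if v = 1 then p₁ else q₁ := by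
  rcases hv with h | h <;> subst h <;> norm_num [stepw]

lemma stepw_vert (v : ℤ) :
    stepw p₁ q₁ p₂ q₂ (0, v) = if v = 1 then p₂ else q₂ := by
  norm_num [stepw]

lemma prod_gfun {n k : ℕ} {e : Fin k → ℤ} {f : Fin (n - k) → ℤ} {E : Finset ℕ}
    (he : ∀ i, e i = 1 ∨ e i = -1)
    (hEsub : E ⊆ range n) (hEcard : E.card = k) :
    ∏ j ∈ range n, stepw p₁ q₁ p₂ q₂ (gfun n k e f E j)
      = (∏ i, if e i = 1 then p₁ else q₁) * (∏ i, if f i = 1 then p₂ else q₂) := by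
  rw [← Finset.prod_sdiff hEsub, mul_comm]
  congr 1
  · refine prod_E_eq hEcard _ _ fun i h => ?_
    have hmem : en E i ∈ E := en_mem (by rw [hEcard]; exact h)
    have hri : rank E (en E i) = i := rank_en (by rw [hEcard]; exact h)
    dsimp only [gfun]
    rw [if_pos hmem]
    simp only [hri, h, dif_pos]
    exact stepw_horiz (he ⟨i, h⟩)
  · refine prod_E_eq (by rw [card_sdiff_of_subset hEsub, card_range, hEcard]) _ _ fun i h => ?_
    have hmem : en (range n \ E) i ∈ range n \ E :=
      en_mem (by rw [card_sdiff_of_subset hEsub, card_range, hEcard]; exact h)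
    have hri : rank (range n \ E) (en (range n \ E) i) = i :=
      rank_en (by rw [card_sdiff_of_subset hEsub, card_range, hEcard]; exact h)
    dsimp only [gfun]
    rw [if_neg (mem_sdiff.1 hmem).2]
    simp only [hri, h, dif_pos]
    exact stepw_vert _

lemma sum_triple {α β γ : Type*} (A : Finset α) (B : Finset β) (C : Finset γ)
    (F : α → ℝ) (G : β → ℝ) :
    ∑ t ∈ (A ×ˢ B) ×ˢ C, F t.1.1 * G t.1.2
      = (∑ a ∈ A, F a) * (∑ b ∈ B, G b) * C.card := by
  calc ∑ t ∈ (A ×ˢ B) ×ˢ C, F t.1.1 * G t.1.2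
      = ∑ p ∈ A ×ˢ B, ∑ _c ∈ C, F p.1 * G p.2 := Finset.sum_product _ _ _
    _ = ∑ p ∈ A ×ˢ B, F p.1 * G p.2 * C.card := by
        refine Finset.sum_congr rfl fun p _ => ?_
        rw [Finset.sum_const, nsmul_eq_mul, mul_comm]
    _ = (∑ p ∈ A ×ˢ B, F p.1 * G p.2) * C.card := (Finset.sum_mul _ _ _).symm
    _ = (∑ a ∈ A, ∑ b ∈ B, F a * G b) * C.card := by rw [Finset.sum_product _ _ _]
    _ = (∑ a ∈ A, F a) * (∑ b ∈ B, G b) * C.card := by rw [← Finset.sum_mul_sum]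

lemma core_prob
    (hmeas : ∀ k, Measurable (ξ k))
    (hindep : iIndepFun ξ P)
    (hp₁ : 0 < p₁) (hq₁ : 0 < q₁) (hp₂ : 0 < p₂) (hq₂ : 0 < q₂)
    (hd₁ : ∀ k, P {ω | ξ k ω = (1, 0)} = ENNReal.ofReal p₁)
    (hd₂ : ∀ k, P {ω | ξ k ω = (-1, 0)} = ENNReal.ofReal q₁)
    (hd₃ : ∀ k, P {ω | ξ k ω = (0, 1)} = ENNReal.ofReal p₂)
    (hd₄ : ∀ k, P {ω | ξ k ω = (0, -1)} = ENNReal.ofReal q₂)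
    (n k : ℕ) (hk : k ≤ n)
    (S_A : Finset (Fin k → ℤ)) (hSA : ∀ e ∈ S_A, ∀ i, e i = 1 ∨ e i = -1)
    (S_B : Finset (Fin (n - k) → ℤ)) (hSB : ∀ f ∈ S_B, ∀ i, f i = 1 ∨ f i = -1) :
    P ({ω | (fun j : Fin k => tilXi ξ Prod.fst ((j : ℕ) + 1) ω) ∈ S_A ∧
         (fun j : Fin (n - k) => tilXi ξ Prod.snd ((j : ℕ) + 1) ω) ∈ S_B ∧
         horizSteps ξ n ω = k} ∩ Gset ξ n)
    = ENNReal.ofReal ((∑ e ∈ S_A, ∏ i, if e i = 1 then p₁ else q₁) *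
        (∑ f ∈ S_B, ∏ i, if f i = 1 then p₂ else q₂) * (n.choose k)) := by
  rw [core_set_eq n k hk S_A hSA S_B hSB]
  rw [union_cyl hmeas ((S_A ×ˢ S_B) ×ˢ (range n).powersetCard k)
    (fun t => fun j => gfun n k t.1.1 t.1.2 t.2 j) n ?_]
  · have hterm : ∀ t ∈ (S_A ×ˢ S_B) ×ˢ (range n).powersetCard k,
        P (Cyl ξ n (fun j => gfun n k t.1.1 t.1.2 t.2 j))
          = ENNReal.ofReal ((∏ i, if t.1.1 i = 1 then p₁ else q₁) *
              (∏ i, if t.1.2 i = 1 then p₂ else q₂)) := by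
      rintro ⟨⟨e, f⟩, E⟩ ht
      simp only [Finset.mem_product, Finset.mem_powersetCard] at ht
      obtain ⟨⟨heS, hfS⟩, hEsub, hEcard⟩ := ht
      rw [prob_cyl_ofReal hindep hp₁ hq₁ hp₂ hq₂ hd₁ hd₂ hd₃ hd₄ n _
        (fun j _ => gfun_mem_vs (hSA e heS) (hSB f hfS) j)]
      rw [prod_gfun (hSA e heS) hEsub hEcard]
    rw [Finset.sum_congr rfl hterm]
    have hnn : ∀ (e : Fin k → ℤ), 0 ≤ ∏ i, if e i = 1 then p₁ else q₁ := by
      intro e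
      refine Finset.prod_nonneg fun i _ => ?_
      split_ifs <;> positivity
    have hnn2 : ∀ (f : Fin (n - k) → ℤ), 0 ≤ ∏ i, if f i = 1 then p₂ else q₂ := by
      intro f
      refine Finset.prod_nonneg fun i _ => ?_
      split_ifs <;> positivity
    rw [← ENNReal.ofReal_sum_of_nonneg (fun t _ => mul_nonneg (hnn _) (hnn2 _))]
    congr 1
    rw [sum_triple S_A S_B ((range n).powersetCard k)
      (fun e => ∏ i, if e i = 1 then p₁ else q₁)
      (fun f => ∏ i, if f i = 1 then p₂ else q₂)]
    simp [Finset.card_powersetCard, card_range]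
  · rintro ⟨⟨e, f⟩, E⟩ ht ⟨⟨e', f'⟩, E'⟩ ht' hagree
    simp only [Finset.mem_product, Finset.mem_powersetCard] at ht ht'
    obtain ⟨⟨heS, hfS⟩, hEsub, hEcard⟩ := ht
    obtain ⟨⟨heS', hfS'⟩, hEsub', hEcard'⟩ := ht'
    have he := hSA e heS
    have he' := hSA e' heS'
    have hagree' : ∀ j < n, gfun n k e f E j = gfun n k e' f' E' j :=
      fun j hj => hagree j hj
    have hEE : E = E' := by
      ext j
      constructor
      · intro hj
        have hjn : j < n := mem_range.1 (hEsub hj)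
        have h1 : (gfun n k e f E j).1 ≠ 0 := (gfun_fst_ne he j).2 hj
        rw [hagree' j hjn] at h1
        exact (gfun_fst_ne he' j).1 h1
      · intro hj
        have hjn : j < n := mem_range.1 (hEsub' hj)
        have h1 : (gfun n k e' f' E' j).1 ≠ 0 := (gfun_fst_ne he' j).2 hj
        rw [← hagree' j hjn] at h1
        exact (gfun_fst_ne he j).1 h1
    subst hEE
    have hee : e = e' := by
      funext i
      have hmem : en E (i : ℕ) ∈ E := en_mem (by rw [hEcard]; exact i.isLt)
      have hlt : en E (i : ℕ) < n := mem_range.1 (hEsub hmem)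
      have hri : rank E (en E (i : ℕ)) = (i : ℕ) :=
        rank_en (by rw [hEcard]; exact i.isLt)
      have := hagree' _ hlt
      dsimp only [gfun] at this
      rw [if_pos hmem, if_pos hmem] at this
      simp only [hri, i.isLt, dif_pos] at this
      simpa using congrArg Prod.fst this
    have hff : f = f' := by
      funext i
      have hcard' : (range n \ E).card = n - k := by
        rw [card_sdiff_of_subset hEsub, card_range, hEcard]
      have hmem : en (range n \ E) (i : ℕ) ∈ range n \ E :=
        en_mem (by rw [hcard']; exact i.isLt)
      have hlt : en (range n \ E) (i : ℕ) < n := mem_range.1 (mem_sdiff.1 hmem).1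
      have hri : rank (range n \ E) (en (range n \ E) (i : ℕ)) = (i : ℕ) :=
        rank_en (by rw [hcard']; exact i.isLt)
      have := hagree' _ hlt
      dsimp only [gfun] at this
      rw [if_neg (mem_sdiff.1 hmem).2, if_neg (mem_sdiff.1 hmem).2] at this
      simp only [hri, i.isLt, dif_pos] at this
      simpa using congrArg Prod.snd this
    rw [hee, hff]

end Core

/-! ### marginal machinery -/

def SAfin (k : ℕ) (A : Set (Fin k → ℤ)) : Finset (Fin k → ℤ) :=
  @Finset.filter _ (· ∈ A) (Classical.decPred _)
    (Fintype.piFinset fun _ => ({1, -1} : Finset ℤ))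

lemma mem_SAfin {k : ℕ} {A : Set (Fin k → ℤ)} {e : Fin k → ℤ} :
    e ∈ SAfin k A ↔ (∀ i, e i = 1 ∨ e i = -1) ∧ e ∈ A := by
  simp [SAfin, Fintype.mem_piFinset]

def pinE (k : ℕ) (E : Finset ℕ) : Finset ℕ := (range k).image (en E)

lemma pinE_subset {k : ℕ} {E : Finset ℕ} (hk : k ≤ E.card) : pinE k E ⊆ E := by
  intro j hj
  obtain ⟨i, hi, rfl⟩ := mem_image.1 hj
  exact en_mem ((mem_range.1 hi).trans_le hk)

lemma mem_pinE_iff {k : ℕ} {E : Finset ℕ} (hk : k ≤ E.card) {j : ℕ} (hj : j ∈ E) :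
    j ∈ pinE k E ↔ rank E j < k := by
  constructor
  · rintro hp
    obtain ⟨i, hi, rfl⟩ := mem_image.1 hp
    rw [rank_en ((mem_range.1 hi).trans_le hk)]
    exact mem_range.1 hi
  · intro hr
    exact mem_image.2 ⟨rank E j, mem_range.2 hr, en_rank hj⟩

lemma card_pinE {k : ℕ} {E : Finset ℕ} (hk : k ≤ E.card) : (pinE k E).card = k := by
  rw [pinE, card_image_of_injOn, card_range]
  intro a ha b hb hab
  exact en_inj ((mem_range.1 ha).trans_le hk) ((mem_range.1 hb).trans_le hk) hab

def gm (k N : ℕ) (e : Fin k → ℤ) (E T : Finset ℕ) (j : ℕ) : ℤ × ℤ :=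
  if j ∈ E then
    (if h : rank E j < k then (e ⟨rank E j, h⟩, 0) else ((if j ∈ T then 1 else -1), 0))
  else (0, if j ∈ T then 1 else -1)

lemma gm_mem_vs {k N : ℕ} {e : Fin k → ℤ} {E T : Finset ℕ}
    (he : ∀ i, e i = 1 ∨ e i = -1) (j : ℕ) : gm k N e E T j ∈ VS := by
  unfold gm
  split_ifs with h1 h2 h3 h4
  · rcases he ⟨rank E j, h2⟩ with h | h <;> rw [h] <;> simp [VS]
  · simp [VS]
  · simp [VS]
  · simp [VS]
  · simp [VS]

lemma gm_fst_ne {k N : ℕ} {e : Fin k → ℤ} {E T : Finset ℕ}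
    (he : ∀ i, e i = 1 ∨ e i = -1) (j : ℕ) :
    (gm k N e E T j).1 ≠ 0 ↔ j ∈ E := by
  unfold gm
  split_ifs with h1 h2 h3 <;> simp [h1]
  · rcases he ⟨rank E j, h2⟩ with h | h <;> rw [h] <;> omega

lemma sum_powerset_prod_ite (s : Finset ℕ) (a b : ℕ → ℝ) :
    ∑ T ∈ s.powerset, ∏ j ∈ s, (if j ∈ T then a j else b j) = ∏ j ∈ s, (a j + b j) := by
  rw [Finset.prod_add]
  refine Finset.sum_congr rfl fun T hT => ?_
  rw [mem_powerset] at hT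
  rw [← Finset.prod_sdiff hT, mul_comm]
  congr 1
  · exact Finset.prod_congr rfl fun j hj => if_pos hj
  · exact Finset.prod_congr rfl fun j hj => if_neg (mem_sdiff.1 hj).2

section Marg
variable {Ω : Type*} [MeasurableSpace Ω] {P : Measure Ω} [IsProbabilityMeasure P]
  {ξ : ℕ → Ω → ℤ × ℤ} {p₁ q₁ p₂ q₂ : ℝ}

lemma prod_eq {a : ℤ × ℤ} {x y : ℤ} (h1 : a.1 = x) (h2 : a.2 = y) : a = (x, y) := by
  cases a; simp_all

lemma vs_vert_sgn {v : ℤ × ℤ} (h : v ∈ VS) (h1 : v.1 = 0) : v.2 = 1 ∨ v.2 = -1 := by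
  rcases vs_cases h with ⟨_, hs⟩ | ⟨_, hs⟩
  · omega
  · exact hs

lemma marg_set_eq (k N : ℕ) (A : Set (Fin k → ℤ)) :
    {ω | (fun j : Fin k => tilXi ξ Prod.fst ((j : ℕ) + 1) ω) ∈ A} ∩
      {ω | k ≤ (Dset ξ N ω).card} ∩ Gset ξ N
    = ⋃ t ∈ ((SAfin k A ×ˢ ((range N).powerset.filter fun E => k ≤ E.card)).sigma
        fun p => (range N \ pinE k p.2).powerset),
        Cyl ξ N (fun j => gm k N t.1.1 t.1.2 t.2 j) := by
  ext ω
  simp only [Set.mem_inter_iff, Set.mem_setOf_eq, Set.mem_iUnion, Finset.mem_sigma,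
    Finset.mem_product, Finset.mem_powerset, Finset.mem_filter, exists_prop]
  constructor
  · rintro ⟨⟨hA, hC⟩, hG⟩
    have hG' : ∀ j < N, ξ j ω ∈ VS := hG
    set E := Dset ξ N ω with hEdef
    have hEsub : E ⊆ range N := Dset_subset
    have hsgn : ∀ (i : ℕ) (h : i < k),
        tilXi ξ Prod.fst (i + 1) ω = (ξ (en E i) ω).1 ∧
          ((ξ (en E i) ω).1 = 1 ∨ (ξ (en E i) ω).1 = -1) := by
      intro i h
      have hic : i < E.card := h.trans_le hC
      refine ⟨bridge_fst i hic, ?_⟩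
      have hmem : en E i ∈ E := en_mem hic
      have h1 : (ξ (en E i) ω).1 ≠ 0 := (mem_filter.1 hmem).2
      have hv := hG' _ (mem_range.1 (hEsub hmem))
      rcases vs_cases hv with ⟨_, h2⟩ | ⟨h1', _⟩
      · exact h2
      · exact absurd h1' h1
    have hSmem : (fun j : Fin k => tilXi ξ Prod.fst ((j : ℕ) + 1) ω) ∈ SAfin k A :=
      mem_SAfin.2 ⟨fun i => by
        rcases hsgn i i.isLt with ⟨ht, hs⟩
        rw [ht]; exact hs, hA⟩
    refine ⟨⟨(fun j : Fin k => tilXi ξ Prod.fst ((j : ℕ) + 1) ω, E),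
      (range N \ pinE k E).filter
        (fun j => (if j ∈ E then (ξ j ω).1 else (ξ j ω).2) = 1)⟩,
      ⟨⟨hSmem, hEsub, hC⟩, filter_subset _ _⟩, ?_⟩
    intro j hj
    dsimp only [gm]
    by_cases hjE : j ∈ E
    · rw [if_pos hjE]
      have h1 : (ξ j ω).1 ≠ 0 := (mem_filter.1 hjE).2
      have h2 : (ξ j ω).2 = 0 := by
        rcases vs_cases (hG' j hj) with ⟨h2, _⟩ | ⟨h1', _⟩
        · exact h2
        · exact absurd h1' h1
      by_cases hr : rank E j < k
      · rw [dif_pos hr]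
        rcases hsgn (rank E j) hr with ⟨ht, _⟩
        rw [en_rank hjE] at ht
        exact prod_eq ht.symm h2
      · rw [dif_neg hr]
        have hjp : j ∉ pinE k E := fun hp => hr ((mem_pinE_iff hC hjE).1 hp)
        have hjfree : j ∈ range N \ pinE k E := mem_sdiff.2 ⟨mem_range.2 hj, hjp⟩
        have hs1 : (ξ j ω).1 = 1 ∨ (ξ j ω).1 = -1 := by
          rcases vs_cases (hG' j hj) with ⟨_, hs⟩ | ⟨h1', _⟩
          · exact hs
          · exact absurd h1' h1
        by_cases hT : (ξ j ω).1 = 1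
        · rw [if_pos (mem_filter.2 ⟨hjfree, by rw [if_pos hjE]; exact hT⟩)]
          exact prod_eq hT h2
        · rw [if_neg (fun hmem => hT (by simpa [hjE] using (mem_filter.1 hmem).2))]
          rcases hs1 with h | h
          · exact absurd h hT
          · exact prod_eq h h2
    · rw [if_neg hjE]
      have h1 : (ξ j ω).1 = 0 := by
        by_contra h1
        exact hjE (mem_filter.2 ⟨mem_range.2 hj, h1⟩)
      have hs2 : (ξ j ω).2 = 1 ∨ (ξ j ω).2 = -1 := vs_vert_sgn (hG' j hj) h1
      have hjp : j ∉ pinE k E := fun hp => hjE (pinE_subset hC hp)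
      have hjfree : j ∈ range N \ pinE k E := mem_sdiff.2 ⟨mem_range.2 hj, hjp⟩
      by_cases hT : (ξ j ω).2 = 1
      · rw [if_pos (mem_filter.2 ⟨hjfree, by rw [if_neg hjE]; exact hT⟩)]
        exact prod_eq h1 hT
      · rw [if_neg (fun hmem => hT (by simpa [hjE] using (mem_filter.1 hmem).2))]
        rcases hs2 with h | h
        · exact absurd h hT
        · exact prod_eq h1 h
  · rintro ⟨⟨⟨e, E⟩, T⟩, ⟨⟨heS, hEsub, hEc⟩, hTsub⟩, hcyl⟩
    obtain ⟨he, heA⟩ := mem_SAfin.1 heS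
    have hG : ∀ j < N, ξ j ω ∈ VS := fun j hj => by
      rw [hcyl j hj]; exact gm_mem_vs he j
    have hDE : Dset ξ N ω = E := by
      ext j
      simp only [Dset, mem_filter, mem_range]
      constructor
      · rintro ⟨hj, h1⟩
        rw [hcyl j hj] at h1
        exact (gm_fst_ne he j).1 h1
      · intro hjE
        have hj : j < N := mem_range.1 (hEsub hjE)
        exact ⟨hj, by rw [hcyl j hj]; exact (gm_fst_ne he j).2 hjE⟩
    have hC : k ≤ (Dset ξ N ω).card := by rw [hDE]; exact hEc
    refine ⟨⟨?_, hC⟩, hG⟩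
    have hvA : (fun j : Fin k => tilXi ξ Prod.fst ((j : ℕ) + 1) ω) = e := by
      funext i
      have hik : (i : ℕ) < (Dset ξ N ω).card := i.isLt.trans_le hC
      rw [bridge_fst (ξ := ξ) i hik, hDE]
      have hic : (i : ℕ) < E.card := by rw [← hDE]; exact hik
      have hmem : en E (i : ℕ) ∈ E := en_mem hic
      have hlt : en E (i : ℕ) < N := mem_range.1 (hEsub hmem)
      rw [hcyl _ hlt]
      dsimp only [gm]
      rw [if_pos hmem]
      have hri : rank E (en E (i : ℕ)) = (i : ℕ) := rank_en hic
      simp only [hri, i.isLt, dif_pos]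
    rw [hvA]; exact heA

def mtail (p₁ q₁ p₂ q₂ : ℝ) (k N : ℕ) : ℝ :=
  ∑ E ∈ (range N).powerset.filter (fun E => k ≤ E.card),
    ∏ j ∈ range N \ pinE k E, ((if j ∈ E then p₁ else p₂) + (if j ∈ E then q₁ else q₂))

lemma marg_prob
    (hmeas : ∀ k, Measurable (ξ k))
    (hindep : iIndepFun ξ P)
    (hp₁ : 0 < p₁) (hq₁ : 0 < q₁) (hp₂ : 0 < p₂) (hq₂ : 0 < q₂)
    (hd₁ : ∀ k, P {ω | ξ k ω = (1, 0)} = ENNReal.ofReal p₁)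
    (hd₂ : ∀ k, P {ω | ξ k ω = (-1, 0)} = ENNReal.ofReal q₁)
    (hd₃ : ∀ k, P {ω | ξ k ω = (0, 1)} = ENNReal.ofReal p₂)
    (hd₄ : ∀ k, P {ω | ξ k ω = (0, -1)} = ENNReal.ofReal q₂)
    (k N : ℕ) (A : Set (Fin k → ℤ)) :
    P ({ω | (fun j : Fin k => tilXi ξ Prod.fst ((j : ℕ) + 1) ω) ∈ A} ∩
        {ω | k ≤ (Dset ξ N ω).card} ∩ Gset ξ N)
      = ENNReal.ofReal ((∑ e ∈ SAfin k A, ∏ i, if e i = 1 then p₁ else q₁) *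
          mtail p₁ q₁ p₂ q₂ k N) := by
  rw [marg_set_eq k N A]
  rw [union_cyl hmeas ((SAfin k A ×ˢ ((range N).powerset.filter fun E => k ≤ E.card)).sigma
      fun p => (range N \ pinE k p.2).powerset)
    (fun t => fun j => gm k N t.1.1 t.1.2 t.2 j) N ?_]
  · have hterm : ∀ t ∈ (SAfin k A ×ˢ ((range N).powerset.filter fun E => k ≤ E.card)).sigma
        (fun p => (range N \ pinE k p.2).powerset),
        P (Cyl ξ N (fun j => gm k N t.1.1 t.1.2 t.2 j))
          = ENNReal.ofReal ((∏ i, if t.1.1 i = 1 then p₁ else q₁) *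
              ∏ j ∈ range N \ pinE k t.1.2,
                (if j ∈ t.2 then (if j ∈ t.1.2 then p₁ else p₂)
                 else (if j ∈ t.1.2 then q₁ else q₂))) := by
      rintro ⟨⟨e, E⟩, T⟩ ht
      simp only [Finset.mem_sigma, Finset.mem_product, Finset.mem_filter,
        Finset.mem_powerset] at ht
      obtain ⟨⟨heS, hEsub, hEc⟩, hTsub⟩ := ht
      obtain ⟨he, _⟩ := mem_SAfin.1 heS
      rw [prob_cyl_ofReal hindep hp₁ hq₁ hp₂ hq₂ hd₁ hd₂ hd₃ hd₄ N _
        (fun j _ => gm_mem_vs he j)]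
      congr 1
      have hpinsub : pinE k E ⊆ range N := (pinE_subset hEc).trans hEsub
      rw [← Finset.prod_sdiff hpinsub, mul_comm]
      congr 1
      · -- pinned product
        rw [pinE, Finset.prod_image (fun a ha b hb hab =>
          en_inj ((mem_range.1 ha).trans_le hEc) ((mem_range.1 hb).trans_le hEc) hab),
          ← Fin.prod_univ_eq_prod_range (fun i => stepw p₁ q₁ p₂ q₂ (gm k N e E T (en E i))) k]
        refine Finset.prod_congr rfl fun i _ => ?_
        have hic : (i : ℕ) < E.card := i.isLt.trans_le hEc
        have hmem : en E (i : ℕ) ∈ E := en_mem hic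
        have hri : rank E (en E (i : ℕ)) = (i : ℕ) := rank_en hic
        dsimp only [gm]
        rw [if_pos hmem]
        simp only [hri, i.isLt, dif_pos]
        exact stepw_horiz (he i)
      · -- free product
        refine Finset.prod_congr rfl fun j hj => ?_
        obtain ⟨hjN, hjp⟩ := mem_sdiff.1 hj
        by_cases hjE : j ∈ E
        · have hr : ¬ rank E j < k := fun hr => hjp ((mem_pinE_iff hEc hjE).2 hr)
          dsimp only [gm]
          rw [if_pos hjE, dif_neg hr, if_pos hjE, if_pos hjE]
          by_cases hT : j ∈ T
          · rw [if_pos hT, if_pos hT]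
            exact stepw_horiz (Or.inl rfl)
          · rw [if_neg hT, if_neg hT]
            exact stepw_horiz (Or.inr rfl)
        · dsimp only [gm]
          rw [if_neg hjE, if_neg hjE, if_neg hjE]
          rw [stepw_vert]
          by_cases hT : j ∈ T
          · rw [if_pos hT, if_pos hT, if_pos rfl]
          · rw [if_neg hT, if_neg hT, if_neg (by norm_num)]
    rw [Finset.sum_congr rfl hterm]
    have hnnA : ∀ (e : Fin k → ℤ), 0 ≤ ∏ i, if e i = 1 then p₁ else q₁ :=
      fun e => Finset.prod_nonneg fun i _ => by split_ifs <;> positivity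
    have hnnB : ∀ (E T : Finset ℕ), 0 ≤ ∏ j ∈ range N \ pinE k E,
        (if j ∈ T then (if j ∈ E then p₁ else p₂) else (if j ∈ E then q₁ else q₂)) :=
      fun E T => Finset.prod_nonneg fun j _ => by split_ifs <;> positivity
    rw [← ENNReal.ofReal_sum_of_nonneg (fun t _ => mul_nonneg (hnnA _) (hnnB _ _))]
    congr 1
    rw [Finset.sum_sigma]
    have hinner : ∀ p ∈ SAfin k A ×ˢ ((range N).powerset.filter fun E => k ≤ E.card),
        (∑ T ∈ (range N \ pinE k p.2).powerset,
          (∏ i, if p.1 i = 1 then p₁ else q₁) *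
            ∏ j ∈ range N \ pinE k p.2,
              (if j ∈ T then (if j ∈ p.2 then p₁ else p₂)
               else (if j ∈ p.2 then q₁ else q₂)))
        = (∏ i, if p.1 i = 1 then p₁ else q₁) *
            ∏ j ∈ range N \ pinE k p.2,
              ((if j ∈ p.2 then p₁ else p₂) + (if j ∈ p.2 then q₁ else q₂)) := by
      intro p _
      rw [← Finset.mul_sum, sum_powerset_prod_ite]
    rw [Finset.sum_congr rfl hinner, Finset.sum_product]
    rw [mtail, Finset.sum_mul_sum]

  · rintro ⟨⟨e, E⟩, T⟩ ht ⟨⟨e', E'⟩, T'⟩ ht' hagree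
    simp only [Finset.mem_sigma, Finset.mem_product, Finset.mem_filter,
      Finset.mem_powerset] at ht ht'
    obtain ⟨⟨heS, hEsub, hEc⟩, hTsub⟩ := ht
    obtain ⟨⟨heS', hEsub', hEc'⟩, hTsub'⟩ := ht'
    obtain ⟨he, _⟩ := mem_SAfin.1 heS
    obtain ⟨he', _⟩ := mem_SAfin.1 heS'
    have hagree' : ∀ j < N, gm k N e E T j = gm k N e' E' T' j := fun j hj => hagree j hj
    have hEE : E = E' := by
      ext j
      constructor
      · intro hj
        have hjn : j < N := mem_range.1 (hEsub hj)
        have h1 : (gm k N e E T j).1 ≠ 0 := (gm_fst_ne he j).2 hj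
        rw [hagree' j hjn] at h1
        exact (gm_fst_ne he' j).1 h1
      · intro hj
        have hjn : j < N := mem_range.1 (hEsub' hj)
        have h1 : (gm k N e' E' T' j).1 ≠ 0 := (gm_fst_ne he' j).2 hj
        rw [← hagree' j hjn] at h1
        exact (gm_fst_ne he j).1 h1
    subst hEE
    have hee : e = e' := by
      funext i
      have hic : (i : ℕ) < E.card := i.isLt.trans_le hEc
      have hmem : en E (i : ℕ) ∈ E := en_mem hic
      have hlt : en E (i : ℕ) < N := mem_range.1 (hEsub hmem)
      have hri : rank E (en E (i : ℕ)) = (i : ℕ) := rank_en hic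
      have h := hagree' _ hlt
      dsimp only [gm] at h
      rw [if_pos hmem, if_pos hmem] at h
      simp only [hri, i.isLt, dif_pos] at h
      simpa using congrArg Prod.fst h
    subst hee
    have hTT : T = T' := by
      ext j
      by_cases hjf : j ∈ range N \ pinE k E
      · have hjN : j < N := mem_range.1 (mem_sdiff.1 hjf).1
        have h := hagree' j hjN
        by_cases hjE : j ∈ E
        · have hr : ¬ rank E j < k := fun hr => (mem_sdiff.1 hjf).2 ((mem_pinE_iff hEc hjE).2 hr)
          dsimp only [gm] at h
          rw [if_pos hjE, if_pos hjE, dif_neg hr, dif_neg hr] at h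
          have h1 := congrArg Prod.fst h
          by_cases hT : j ∈ T <;> by_cases hT' : j ∈ T' <;>
            simp [hT, hT'] at h1 ⊢ <;> omega
        · dsimp only [gm] at h
          rw [if_neg hjE, if_neg hjE] at h
          have h2 := congrArg Prod.snd h
          by_cases hT : j ∈ T <;> by_cases hT' : j ∈ T' <;>
            simp [hT, hT'] at h2 ⊢ <;> omega
      · constructor
        · intro h; exact absurd (hTsub h) hjf
        · intro h; exact absurd (hTsub' h) hjf
    rw [hTT]

lemma Dset_mono {ω : Ω} {M N : ℕ} (h : M ≤ N) : Dset ξ M ω ⊆ Dset ξ N ω :=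
  Finset.filter_subset_filter _ (by exact Finset.range_subset_range.2 h)

lemma fst_zero_prob
    (hmeas : ∀ k, Measurable (ξ k))
    (hsum : p₁ + q₁ + p₂ + q₂ = 1)
    (hp₁ : 0 < p₁) (hq₁ : 0 < q₁) (hp₂ : 0 < p₂) (hq₂ : 0 < q₂)
    (hd₁ : ∀ k, P {ω | ξ k ω = (1, 0)} = ENNReal.ofReal p₁)
    (hd₂ : ∀ k, P {ω | ξ k ω = (-1, 0)} = ENNReal.ofReal q₁)
    (hd₃ : ∀ k, P {ω | ξ k ω = (0, 1)} = ENNReal.ofReal p₂)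
    (hd₄ : ∀ k, P {ω | ξ k ω = (0, -1)} = ENNReal.ofReal q₂)
    (j : ℕ) : P {ω | (ξ j ω).1 = 0} = ENNReal.ofReal (p₂ + q₂) := by
  have hm : ∀ v : ℤ × ℤ, MeasurableSet {ω | ξ j ω = v} := fun v => hmeas j (all_meas {v})
  have hdisj : Disjoint {ω | ξ j ω = ((0 : ℤ), (1 : ℤ))} {ω | ξ j ω = ((0 : ℤ), (-1 : ℤ))} := by
    refine Set.disjoint_left.2 fun ω h1 h2 => ?_
    rw [Set.mem_setOf_eq] at h1 h2
    rw [h1] at h2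
    simp at h2
  refine le_antisymm ?_ ?_
  · calc P {ω | (ξ j ω).1 = 0}
        ≤ P ({ω | ξ j ω = ((0:ℤ), (1:ℤ))} ∪ {ω | ξ j ω = ((0:ℤ), (-1:ℤ))} ∪ {ω | ξ j ω ∉ VS}) := by
          refine measure_mono fun ω hω => ?_
          rw [Set.mem_setOf_eq] at hω
          by_cases hv : ξ j ω ∈ VS
          · rcases vs_vert_sgn hv hω with h | h
            · exact Or.inl (Or.inl (prod_eq hω h))
            · exact Or.inl (Or.inr (prod_eq hω h))
          · exact Or.inr hv
      _ ≤ P ({ω | ξ j ω = ((0:ℤ), (1:ℤ))} ∪ {ω | ξ j ω = ((0:ℤ), (-1:ℤ))}) + P {ω | ξ j ω ∉ VS} :=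
          measure_union_le _ _
      _ = P ({ω | ξ j ω = ((0:ℤ), (1:ℤ))} ∪ {ω | ξ j ω = ((0:ℤ), (-1:ℤ))}) := by
          rw [null_not_vs hmeas hsum hp₁ hq₁ hp₂ hq₂ hd₁ hd₂ hd₃ hd₄ j, add_zero]
      _ = ENNReal.ofReal p₂ + ENNReal.ofReal q₂ := by
          rw [measure_union hdisj (hm _), hd₃ j, hd₄ j]
      _ = ENNReal.ofReal (p₂ + q₂) := (ENNReal.ofReal_add hp₂.le hq₂.le).symm
  · calc ENNReal.ofReal (p₂ + q₂)
        = P ({ω | ξ j ω = ((0:ℤ), (1:ℤ))} ∪ {ω | ξ j ω = ((0:ℤ), (-1:ℤ))}) := by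
          rw [measure_union hdisj (hm _), hd₃ j, hd₄ j, ENNReal.ofReal_add hp₂.le hq₂.le]
      _ ≤ P {ω | (ξ j ω).1 = 0} := by
          refine measure_mono fun ω hω => ?_
          rcases hω with h | h <;> rw [Set.mem_setOf_eq] at h ⊢ <;> rw [h]

lemma null_noC
    (hmeas : ∀ k, Measurable (ξ k))
    (hindep : iIndepFun ξ P)
    (hsum : p₁ + q₁ + p₂ + q₂ = 1)
    (hp₁ : 0 < p₁) (hq₁ : 0 < q₁) (hp₂ : 0 < p₂) (hq₂ : 0 < q₂)
    (hd₁ : ∀ k, P {ω | ξ k ω = (1, 0)} = ENNReal.ofReal p₁)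
    (hd₂ : ∀ k, P {ω | ξ k ω = (-1, 0)} = ENNReal.ofReal q₁)
    (hd₃ : ∀ k, P {ω | ξ k ω = (0, 1)} = ENNReal.ofReal p₂)
    (hd₄ : ∀ k, P {ω | ξ k ω = (0, -1)} = ENNReal.ofReal q₂)
    (k : ℕ) : P (⋃ N, {ω | k ≤ (Dset ξ N ω).card})ᶜ = 0 := by
  rcases Nat.eq_zero_or_pos k with rfl | hkpos
  · have : (⋃ N, {ω : Ω | 0 ≤ (Dset ξ N ω).card}) = Set.univ := by
      ext ω; simp
    rw [this, Set.compl_univ, measure_empty]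
  have hblock : ∀ a L : ℕ,
      P (⋂ j ∈ Finset.Ico a (a + L), {ω | (ξ j ω).1 = 0}) = ENNReal.ofReal (p₂ + q₂) ^ L := by
    intro a L
    rw [hindep.meas_biInter (s := fun j => {ω | (ξ j ω).1 = 0})
      (fun j _ => ⟨{v : ℤ × ℤ | v.1 = 0}, all_meas _, rfl⟩)]
    rw [Finset.prod_congr rfl (fun j _ =>
      fst_zero_prob hmeas hsum hp₁ hq₁ hp₂ hq₂ hd₁ hd₂ hd₃ hd₄ j)]
    rw [Finset.prod_const, Nat.card_Ico]
    congr 1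
    omega
  have hle : ∀ L : ℕ, 1 ≤ L →
      P (⋃ N, {ω | k ≤ (Dset ξ N ω).card})ᶜ ≤ k * ENNReal.ofReal (p₂ + q₂) ^ L := by
    intro L hL
    have hcover : (⋃ N, {ω | k ≤ (Dset ξ N ω).card})ᶜ ⊆
        ⋃ b ∈ (univ : Finset (Fin k)), ⋂ j ∈ Finset.Ico ((b : ℕ) * L) ((b : ℕ) * L + L),
          {ω | (ξ j ω).1 = 0} := by
      intro ω hω
      simp only [Set.mem_compl_iff, Set.mem_iUnion, Set.mem_setOf_eq, not_exists, not_le] at hω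
      have hcard := hω (k * L)
      by_contra hno
      simp only [Set.mem_iUnion, Set.mem_iInter, Set.mem_setOf_eq, not_exists, not_forall,
        Finset.mem_univ, exists_prop, true_and] at hno
      have hch : ∀ b : Fin k, ∃ j, j ∈ Finset.Ico ((b : ℕ) * L) ((b : ℕ) * L + L) ∧
          (ξ j ω).1 ≠ 0 := by
        intro b
        obtain ⟨j, hj1, hj2⟩ := hno b
        exact ⟨j, hj1, hj2⟩
      choose F hmemF hneF using hch
      have hinj : Set.InjOn F (univ : Finset (Fin k)) := by
        intro b _ b' _ hbb
        have h1 := Finset.mem_Ico.1 (hmemF b)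
        have h2 := Finset.mem_Ico.1 (hmemF b')
        rcases lt_trichotomy (b : ℕ) (b' : ℕ) with h | h | h
        · have hstep : (b : ℕ) * L + L ≤ (b' : ℕ) * L := by
            calc (b : ℕ) * L + L = ((b : ℕ) + 1) * L := by ring
              _ ≤ (b' : ℕ) * L := Nat.mul_le_mul_right L (by omega)
          rw [hbb] at h1
          omega
        · exact Fin.ext h
        · have hstep : (b' : ℕ) * L + L ≤ (b : ℕ) * L := by
            calc (b' : ℕ) * L + L = ((b' : ℕ) + 1) * L := by ring
              _ ≤ (b : ℕ) * L := Nat.mul_le_mul_right L (by omega)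
          rw [hbb] at h1
          omega
      have hmaps : ∀ b ∈ (univ : Finset (Fin k)), F b ∈ Dset ξ (k * L) ω := by
        intro b _
        have h1 := Finset.mem_Ico.1 (hmemF b)
        refine mem_filter.2 ⟨mem_range.2 ?_, hneF b⟩
        have hstep : (b : ℕ) * L + L ≤ k * L := by
          calc (b : ℕ) * L + L = ((b : ℕ) + 1) * L := by ring
            _ ≤ k * L := Nat.mul_le_mul_right L b.isLt
        omega
      have := Finset.card_le_card_of_injOn F hmaps hinj
      simp only [Finset.card_univ, Fintype.card_fin] at this
      omega
    calc P (⋃ N, {ω | k ≤ (Dset ξ N ω).card})ᶜ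
        ≤ P (⋃ b ∈ (univ : Finset (Fin k)), ⋂ j ∈ Finset.Ico ((b : ℕ) * L) ((b : ℕ) * L + L),
            {ω | (ξ j ω).1 = 0}) := measure_mono hcover
      _ ≤ ∑ b ∈ (univ : Finset (Fin k)), P (⋂ j ∈ Finset.Ico ((b : ℕ) * L) ((b : ℕ) * L + L),
            {ω | (ξ j ω).1 = 0}) := measure_biUnion_finset_le _ _
      _ = ∑ _b ∈ (univ : Finset (Fin k)), ENNReal.ofReal (p₂ + q₂) ^ L :=
          Finset.sum_congr rfl fun b _ => hblock _ L
      _ = k * ENNReal.ofReal (p₂ + q₂) ^ L := by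
          rw [Finset.sum_const, Finset.card_univ, Fintype.card_fin, nsmul_eq_mul]
  have htends : Tendsto (fun L : ℕ => (k : ℝ≥0∞) * ENNReal.ofReal (p₂ + q₂) ^ L)
      atTop (𝓝 0) := by
    have h1 : ENNReal.ofReal (p₂ + q₂) < 1 := ENNReal.ofReal_lt_one.2 (by linarith)
    have := ENNReal.Tendsto.const_mul (a := (k : ℝ≥0∞))
      (ENNReal.tendsto_pow_atTop_nhds_zero_of_lt_one h1)
      (Or.inr (ENNReal.natCast_ne_top k))
    simpa using this
  have := ge_of_tendsto htends (Filter.eventually_atTop.2 ⟨1, fun L hL => hle L hL⟩)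
  exact le_antisymm this (zero_le)

lemma sum_univ_cA (p₁ q₁ : ℝ) (k : ℕ) :
    ∑ e ∈ SAfin k Set.univ, ∏ i, (if e i = 1 then p₁ else q₁) = (p₁ + q₁) ^ k := by
  have h1 : SAfin k Set.univ = Fintype.piFinset fun _ => ({1, -1} : Finset ℤ) := by
    ext e; simp [SAfin]
  rw [h1, ← Finset.prod_univ_sum (fun _ : Fin k => ({1, -1} : Finset ℤ))
    (fun _ v => if v = 1 then p₁ else q₁)]
  rw [Finset.prod_congr rfl (fun i _ => by
    rw [Finset.sum_pair (by decide : (1 : ℤ) ≠ -1)]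
    norm_num : ∀ i ∈ (univ : Finset (Fin k)),
      (∑ v ∈ ({1, -1} : Finset ℤ), if v = 1 then p₁ else q₁) = p₁ + q₁)]
  rw [Finset.prod_const, Finset.card_univ, Fintype.card_fin]

lemma marginal
    (hmeas : ∀ k, Measurable (ξ k))
    (hindep : iIndepFun ξ P)
    (hsum : p₁ + q₁ + p₂ + q₂ = 1)
    (hp₁ : 0 < p₁) (hq₁ : 0 < q₁) (hp₂ : 0 < p₂) (hq₂ : 0 < q₂)
    (hd₁ : ∀ k, P {ω | ξ k ω = (1, 0)} = ENNReal.ofReal p₁)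
    (hd₂ : ∀ k, P {ω | ξ k ω = (-1, 0)} = ENNReal.ofReal q₁)
    (hd₃ : ∀ k, P {ω | ξ k ω = (0, 1)} = ENNReal.ofReal p₂)
    (hd₄ : ∀ k, P {ω | ξ k ω = (0, -1)} = ENNReal.ofReal q₂)
    (k : ℕ) (A : Set (Fin k → ℤ)) :
    P {ω | (fun j : Fin k => tilXi ξ Prod.fst ((j : ℕ) + 1) ω) ∈ A}
      = ENNReal.ofReal (∑ e ∈ SAfin k A, ∏ i,
          if e i = 1 then p₁ / (p₁ + q₁) else q₁ / (p₁ + q₁)) := by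
  have hBallC : P {ω | ∀ j, ξ j ω ∈ VS}ᶜ = 0 :=
    null_BallC hmeas hsum hp₁ hq₁ hp₂ hq₂ hd₁ hd₂ hd₃ hd₄
  have hCU : P (⋃ N, {ω | k ≤ (Dset ξ N ω).card})ᶜ = 0 :=
    null_noC hmeas hindep hsum hp₁ hq₁ hp₂ hq₂ hd₁ hd₂ hd₃ hd₄ k
  have h₁pos : (0 : ℝ) < p₁ + q₁ := by linarith
  have hsan_nonneg : (0 : ℝ) ≤ ∑ e ∈ SAfin k A, ∏ i,
      if e i = 1 then p₁ / (p₁ + q₁) else q₁ / (p₁ + q₁) := by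
    refine Finset.sum_nonneg fun e _ => Finset.prod_nonneg fun i _ => ?_
    split_ifs <;> positivity
  have hfact : (∑ e ∈ SAfin k A, ∏ i, if e i = 1 then p₁ else q₁)
      = (∑ e ∈ SAfin k A, ∏ i, if e i = 1 then p₁ / (p₁ + q₁) else q₁ / (p₁ + q₁))
        * (p₁ + q₁) ^ k := by
    rw [Finset.sum_mul]
    refine Finset.sum_congr rfl fun e _ => ?_
    have hpow : (p₁ + q₁) ^ k = ∏ _i : Fin k, (p₁ + q₁) := by
      rw [Finset.prod_const, Finset.card_univ, Fintype.card_fin]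
    rw [hpow, ← Finset.prod_mul_distrib]
    refine Finset.prod_congr rfl fun i _ => ?_
    split_ifs <;> field_simp
  have huniv : {ω : Ω | (fun j : Fin k => tilXi ξ Prod.fst ((j : ℕ) + 1) ω)
      ∈ (Set.univ : Set (Fin k → ℤ))} = Set.univ := by
    ext ω; simp
  have key : ∀ N, P ({ω | (fun j : Fin k => tilXi ξ Prod.fst ((j : ℕ) + 1) ω) ∈ A} ∩
        {ω | ∀ j, ξ j ω ∈ VS} ∩ {ω | k ≤ (Dset ξ N ω).card})
      = ENNReal.ofReal (∑ e ∈ SAfin k A, ∏ i,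
          if e i = 1 then p₁ / (p₁ + q₁) else q₁ / (p₁ + q₁))
        * P ({ω | ∀ j, ξ j ω ∈ VS} ∩ {ω | k ≤ (Dset ξ N ω).card}) := by
    intro N
    have hGN : P (Gset ξ N)ᶜ = 0 :=
      null_GsetC hmeas hsum hp₁ hq₁ hp₂ hq₂ hd₁ hd₂ hd₃ hd₄ N
    have e1 : {ω | (fun j : Fin k => tilXi ξ Prod.fst ((j : ℕ) + 1) ω) ∈ A} ∩
        {ω | ∀ j, ξ j ω ∈ VS} ∩ {ω | k ≤ (Dset ξ N ω).card}
        = ({ω | (fun j : Fin k => tilXi ξ Prod.fst ((j : ℕ) + 1) ω) ∈ A} ∩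
          {ω | k ≤ (Dset ξ N ω).card}) ∩ {ω | ∀ j, ξ j ω ∈ VS} := by
      ext ω; simp only [Set.mem_inter_iff, Set.mem_setOf_eq]; tauto
    have e2 : {ω : Ω | ∀ j, ξ j ω ∈ VS} ∩ {ω | k ≤ (Dset ξ N ω).card}
        = ({ω | k ≤ (Dset ξ N ω).card} : Set Ω) ∩ {ω | ∀ j, ξ j ω ∈ VS} :=
      Set.inter_comm _ _
    rw [e1, inter_conull hBallC, e2, inter_conull hBallC,
      ← inter_conull (X := {ω | (fun j : Fin k => tilXi ξ Prod.fst ((j : ℕ) + 1) ω) ∈ A} ∩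
        {ω | k ≤ (Dset ξ N ω).card}) hGN,
      ← inter_conull (X := ({ω | k ≤ (Dset ξ N ω).card} : Set Ω)) hGN]
    rw [marg_prob hmeas hindep hp₁ hq₁ hp₂ hq₂ hd₁ hd₂ hd₃ hd₄ k N A]
    have e3 : ({ω | k ≤ (Dset ξ N ω).card} : Set Ω) ∩ Gset ξ N
        = {ω | (fun j : Fin k => tilXi ξ Prod.fst ((j : ℕ) + 1) ω)
            ∈ (Set.univ : Set (Fin k → ℤ))} ∩
          {ω | k ≤ (Dset ξ N ω).card} ∩ Gset ξ N := by
      rw [huniv, Set.univ_inter]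
    rw [e3, marg_prob hmeas hindep hp₁ hq₁ hp₂ hq₂ hd₁ hd₂ hd₃ hd₄ k N Set.univ]
    rw [sum_univ_cA p₁ q₁ k, ← ENNReal.ofReal_mul hsan_nonneg, hfact]
    ring_nf
  have hmono : Monotone (fun N => ({ω | k ≤ (Dset ξ N ω).card} : Set Ω)) := by
    intro M N h ω hω
    exact le_trans hω (Finset.card_le_card (Dset_mono h))
  have hmono1 : Monotone (fun N =>
      {ω | (fun j : Fin k => tilXi ξ Prod.fst ((j : ℕ) + 1) ω) ∈ A} ∩
        {ω | ∀ j, ξ j ω ∈ VS} ∩ {ω | k ≤ (Dset ξ N ω).card}) :=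
    fun M N h => Set.inter_subset_inter Set.Subset.rfl (hmono h)
  have hmono2 : Monotone (fun N =>
      ({ω | ∀ j, ξ j ω ∈ VS} : Set Ω) ∩ {ω | k ≤ (Dset ξ N ω).card}) :=
    fun M N h => Set.inter_subset_inter Set.Subset.rfl (hmono h)
  have hYnull : P ({ω | ∀ j, ξ j ω ∈ VS} ∩ ⋃ N, {ω | k ≤ (Dset ξ N ω).card})ᶜ = 0 := by
    rw [Set.compl_inter]
    exact measure_union_null hBallC hCU
  have hU1 : (⋃ N, ({ω | (fun j : Fin k => tilXi ξ Prod.fst ((j : ℕ) + 1) ω) ∈ A} ∩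
      {ω | ∀ j, ξ j ω ∈ VS} ∩ {ω | k ≤ (Dset ξ N ω).card}))
      = {ω | (fun j : Fin k => tilXi ξ Prod.fst ((j : ℕ) + 1) ω) ∈ A} ∩
        ({ω | ∀ j, ξ j ω ∈ VS} ∩ ⋃ N, {ω | k ≤ (Dset ξ N ω).card}) := by
    ext ω
    simp only [Set.mem_iUnion, Set.mem_inter_iff, Set.mem_setOf_eq]
    tauto
  have hU2 : (⋃ N, (({ω | ∀ j, ξ j ω ∈ VS} : Set Ω) ∩ {ω | k ≤ (Dset ξ N ω).card}))
      = {ω | ∀ j, ξ j ω ∈ VS} ∩ ⋃ N, {ω | k ≤ (Dset ξ N ω).card} := by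
    ext ω
    simp only [Set.mem_iUnion, Set.mem_inter_iff, Set.mem_setOf_eq]
    tauto
  have t1 := tendsto_measure_iUnion_atTop (μ := P) hmono1
  have t2 := tendsto_measure_iUnion_atTop (μ := P) hmono2
  rw [hU1] at t1
  rw [hU2] at t2
  rw [inter_conull hYnull] at t1
  have hlim2 : P ({ω | ∀ j, ξ j ω ∈ VS} ∩ ⋃ N, {ω | k ≤ (Dset ξ N ω).card}) = 1 := by
    have h := inter_conull (P := P) (X := Set.univ) hYnull
    rw [Set.univ_inter] at h
    rw [h, measure_univ]
  rw [hlim2] at t2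
  have t2' := ENNReal.Tendsto.const_mul
    (a := ENNReal.ofReal (∑ e ∈ SAfin k A, ∏ i,
      if e i = 1 then p₁ / (p₁ + q₁) else q₁ / (p₁ + q₁))) t2
    (Or.inr ENNReal.ofReal_ne_top)
  rw [mul_one] at t2'
  have heq : (fun N => P ({ω | (fun j : Fin k => tilXi ξ Prod.fst ((j : ℕ) + 1) ω) ∈ A} ∩
        {ω | ∀ j, ξ j ω ∈ VS} ∩ {ω | k ≤ (Dset ξ N ω).card}))
      = fun N => ENNReal.ofReal (∑ e ∈ SAfin k A, ∏ i,
          if e i = 1 then p₁ / (p₁ + q₁) else q₁ / (p₁ + q₁))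
        * P ({ω | ∀ j, ξ j ω ∈ VS} ∩ {ω | k ≤ (Dset ξ N ω).card}) := funext key
  rw [show (P ∘ fun N => ({ω | (fun j : Fin k => tilXi ξ Prod.fst ((j : ℕ) + 1) ω) ∈ A} ∩
      {ω | ∀ j, ξ j ω ∈ VS} ∩ {ω | k ≤ (Dset ξ N ω).card}))
    = fun N => P ({ω | (fun j : Fin k => tilXi ξ Prod.fst ((j : ℕ) + 1) ω) ∈ A} ∩
      {ω | ∀ j, ξ j ω ∈ VS} ∩ {ω | k ≤ (Dset ξ N ω).card}) from rfl, heq] at t1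
  have t2'' : Tendsto (fun N => ENNReal.ofReal (∑ e ∈ SAfin k A, ∏ i,
      if e i = 1 then p₁ / (p₁ + q₁) else q₁ / (p₁ + q₁))
        * P ({ω | ∀ j, ξ j ω ∈ VS} ∩ {ω | k ≤ (Dset ξ N ω).card})) atTop
      (𝓝 (ENNReal.ofReal (∑ e ∈ SAfin k A, ∏ i,
        if e i = 1 then p₁ / (p₁ + q₁) else q₁ / (p₁ + q₁)))) := t2'
  exact tendsto_nhds_unique t1 t2''

end Marg

/-! ### swap transport for the vertical marginal -/

section Swap
variable {Ω : Type*} {ξ : ℕ → Ω → ℤ × ℤ} {ω : Ω}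

lemma walk2_swap (t : ℕ) (ω : Ω) :
    walk2 (fun m ω => Prod.swap (ξ m ω)) t ω = Prod.swap (walk2 ξ t ω) := by
  induction t with
  | zero => simp [walk2]
  | succ t ih =>
    rw [walk2_succ, walk2_succ, ih]
    rfl

lemma hitTime_swap : ∀ (m : ℕ) (ω : Ω),
    hitTime (fun m ω => Prod.swap (ξ m ω)) Prod.fst m ω = hitTime ξ Prod.snd m ω := by
  intro m
  induction m with
  | zero => intro ω; rfl
  | succ m ih =>
    intro ω
    show sInf {t | hitTime (fun m ω => Prod.swap (ξ m ω)) Prod.fst m ω < t ∧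
        (walk2 (fun m ω => Prod.swap (ξ m ω)) t ω).1 ≠
          (walk2 (fun m ω => Prod.swap (ξ m ω)) (t - 1) ω).1}
      = sInf {t | hitTime ξ Prod.snd m ω < t ∧
          (walk2 ξ t ω).2 ≠ (walk2 ξ (t - 1) ω).2}
    congr 1
    ext t
    simp only [Set.mem_setOf_eq]
    rw [ih ω, walk2_swap, walk2_swap]
    simp

lemma tilXi_swap (i : ℕ) (ω : Ω) :
    tilXi (fun m ω => Prod.swap (ξ m ω)) Prod.fst i ω = tilXi ξ Prod.snd i ω := by
  unfold tilXi watched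
  rw [hitTime_swap, hitTime_swap, walk2_swap, walk2_swap]
  simp

end Swap

section Marg2
variable {Ω : Type*} [MeasurableSpace Ω] {P : Measure Ω} [IsProbabilityMeasure P]
  {ξ : ℕ → Ω → ℤ × ℤ} {p₁ q₁ p₂ q₂ : ℝ}

lemma marginal_snd
    (hmeas : ∀ k, Measurable (ξ k))
    (hindep : iIndepFun ξ P)
    (hsum : p₁ + q₁ + p₂ + q₂ = 1)
    (hp₁ : 0 < p₁) (hq₁ : 0 < q₁) (hp₂ : 0 < p₂) (hq₂ : 0 < q₂)
    (hd₁ : ∀ k, P {ω | ξ k ω = (1, 0)} = ENNReal.ofReal p₁)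
    (hd₂ : ∀ k, P {ω | ξ k ω = (-1, 0)} = ENNReal.ofReal q₁)
    (hd₃ : ∀ k, P {ω | ξ k ω = (0, 1)} = ENNReal.ofReal p₂)
    (hd₄ : ∀ k, P {ω | ξ k ω = (0, -1)} = ENNReal.ofReal q₂)
    (κ : ℕ) (B : Set (Fin κ → ℤ)) :
    P {ω | (fun j : Fin κ => tilXi ξ Prod.snd ((j : ℕ) + 1) ω) ∈ B}
      = ENNReal.ofReal (∑ e ∈ SAfin κ B, ∏ i,
          if e i = 1 then p₂ / (p₂ + q₂) else q₂ / (p₂ + q₂)) := by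
  have hswapeq : ∀ (j : ℕ) (v : ℤ × ℤ),
      {ω | Prod.swap (ξ j ω) = v} = {ω | ξ j ω = Prod.swap v} := by
    intro j v
    ext ω
    constructor
    · intro h
      rw [Set.mem_setOf_eq] at h ⊢
      rw [← h, Prod.swap_swap]
    · intro h
      rw [Set.mem_setOf_eq] at h ⊢
      rw [h, Prod.swap_swap]
  have hset : {ω | (fun j : Fin κ => tilXi ξ Prod.snd ((j : ℕ) + 1) ω) ∈ B}
      = {ω | (fun j : Fin κ =>
          tilXi (fun m ω => Prod.swap (ξ m ω)) Prod.fst ((j : ℕ) + 1) ω) ∈ B} := by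
    ext ω
    rw [Set.mem_setOf_eq, Set.mem_setOf_eq]
    have : (fun j : Fin κ => tilXi ξ Prod.snd ((j : ℕ) + 1) ω)
        = (fun j : Fin κ =>
            tilXi (fun m ω => Prod.swap (ξ m ω)) Prod.fst ((j : ℕ) + 1) ω) := by
      funext j
      rw [tilXi_swap]
    rw [this]
  rw [hset]
  have hindep' : iIndepFun
      (fun m ω => Prod.swap (ξ m ω)) P :=
    hindep.comp (fun _ => Prod.swap) (fun _ => measurable_swap)
  exact marginal (ξ := fun m ω => Prod.swap (ξ m ω))
    (fun j => measurable_swap.comp (hmeas j)) hindep'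
    (by linarith) hp₂ hq₂ hp₁ hq₁
    (fun j => by rw [hswapeq]; exact hd₃ j)
    (fun j => by rw [hswapeq]; exact hd₄ j)
    (fun j => by rw [hswapeq]; exact hd₁ j)
    (fun j => by rw [hswapeq]; exact hd₂ j)
    κ B

end Marg2

lemma sum_norm_fact {k : ℕ} (S : Finset (Fin k → ℤ)) (a b : ℝ) (hab : a + b ≠ 0) :
    ∑ e ∈ S, ∏ i, (if e i = 1 then a else b)
      = (∑ e ∈ S, ∏ i, (if e i = 1 then a / (a + b) else b / (a + b))) * (a + b) ^ k := by
  rw [Finset.sum_mul]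
  refine Finset.sum_congr rfl fun e _ => ?_
  have hpow : (a + b) ^ k = ∏ _i : Fin k, (a + b) := by
    rw [Finset.prod_const, Finset.card_univ, Fintype.card_fin]
  rw [hpow, ← Finset.prod_mul_distrib]
  refine Finset.prod_congr rfl fun i _ => ?_
  split_ifs <;> field_simp

section SignMem
variable {Ω : Type*} [MeasurableSpace Ω] {ξ : ℕ → Ω → ℤ × ℤ} {ω : Ω}

lemma sign_mem {n k : ℕ} (hG : ∀ j < n, ξ j ω ∈ VS)
    (hH : horizSteps ξ n ω = k) :
    (∀ i : Fin k, tilXi ξ Prod.fst ((i : ℕ) + 1) ω = 1 ∨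
        tilXi ξ Prod.fst ((i : ℕ) + 1) ω = -1) ∧
    (∀ i : Fin (n - k), tilXi ξ Prod.snd ((i : ℕ) + 1) ω = 1 ∨
        tilXi ξ Prod.snd ((i : ℕ) + 1) ω = -1) := by
  have hDcard : (Dset ξ n ω).card = k := by rw [horizSteps_eq] at hH; exact hH
  constructor
  · intro i
    have hic : (i : ℕ) < (Dset ξ n ω).card := by rw [hDcard]; exact i.isLt
    rw [bridge_fst i hic]
    have hmem := en_mem hic
    have h1 : (ξ (en (Dset ξ n ω) (i : ℕ)) ω).1 ≠ 0 := (mem_filter.1 hmem).2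
    have hv := hG _ (mem_range.1 (Dset_subset hmem))
    rcases vs_cases hv with ⟨_, hs⟩ | ⟨h0, _⟩
    · exact hs
    · exact absurd h0 h1
  · intro i
    have hE' := Eset_vert (ξ := ξ) (ω := ω) (N := n) hG
    have hcard : ((range n).filter (fun j => (ξ j ω).2 ≠ 0)).card = n - k := by
      rw [hE', card_sdiff_of_subset Dset_subset, card_range, hDcard]
    have hic : (i : ℕ) < ((range n).filter (fun j => (ξ j ω).2 ≠ 0)).card := by
      rw [hcard]; exact i.isLt
    rw [bridge_snd i hic]
    have hmem := en_mem hic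
    have h2 : (ξ (en ((range n).filter (fun j => (ξ j ω).2 ≠ 0)) (i : ℕ)) ω).2 ≠ 0 :=
      (mem_filter.1 hmem).2
    have hv := hG _ (mem_range.1 (mem_filter.1 hmem).1)
    rcases vs_cases hv with ⟨h0, _⟩ | ⟨_, hs⟩
    · exact absurd h0 h2
    · exact hs

end SignMem

end Stmt6Aux

open Stmt6Aux Finset in
/-- Shuffling lemma: the joint probability of prescribed values for the first `k` watched
horizontal increments, the first `n-k` watched vertical increments, and `H_n = k`
factorises as `p̃₁^I q̃₁^{k-I} p̃₂^J q̃₂^{(n-k)-J} C(n,k) h₁^k h₂^{n-k}`; consequently the two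
watched increment vectors and the event `{H_n = k}` are independent. -/
theorem stmt6 {Ω : Type*} [MeasurableSpace Ω] (P : Measure Ω) [IsProbabilityMeasure P]
    (ξ : ℕ → Ω → ℤ × ℤ) (hmeas : ∀ k, Measurable (ξ k))
    (hindep : iIndepFun ξ P)
    (p₁ q₁ p₂ q₂ h₁ h₂ : ℝ)
    (hp₁ : 0 < p₁) (hq₁ : 0 < q₁) (hp₂ : 0 < p₂) (hq₂ : 0 < q₂)
    (hsum : p₁ + q₁ + p₂ + q₂ = 1)
    (hh₁ : h₁ = p₁ + q₁) (hh₂ : h₂ = p₂ + q₂)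
    (hd₁ : ∀ k, P {ω | ξ k ω = (1, 0)} = ENNReal.ofReal p₁)
    (hd₂ : ∀ k, P {ω | ξ k ω = (-1, 0)} = ENNReal.ofReal q₁)
    (hd₃ : ∀ k, P {ω | ξ k ω = (0, 1)} = ENNReal.ofReal p₂)
    (hd₄ : ∀ k, P {ω | ξ k ω = (0, -1)} = ENNReal.ofReal q₂)
    (n k : ℕ) (hk : k ≤ n)
    (ε : Fin k → ℤ) (η : Fin (n - k) → ℤ)
    (hε : ∀ j, ε j = 1 ∨ ε j = -1) (hη : ∀ j, η j = 1 ∨ η j = -1)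
    (I J : ℕ)
    (hI : I = (Finset.univ.filter (fun j => ε j = 1)).card)
    (hJ : J = (Finset.univ.filter (fun j => η j = 1)).card) :
    P {ω | (∀ j : Fin k, tilXi ξ Prod.fst ((j : ℕ) + 1) ω = ε j) ∧
           (∀ j : Fin (n - k), tilXi ξ Prod.snd ((j : ℕ) + 1) ω = η j) ∧
           horizSteps ξ n ω = k}
      = ENNReal.ofReal
          ((p₁ / h₁) ^ I * (q₁ / h₁) ^ (k - I) * (p₂ / h₂) ^ J * (q₂ / h₂) ^ (n - k - J) *
            (n.choose k) * h₁ ^ k * h₂ ^ (n - k)) ∧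
    ∀ (A : Set (Fin k → ℤ)) (B : Set (Fin (n - k) → ℤ)),
      P ({ω | (fun j : Fin k => tilXi ξ Prod.fst ((j : ℕ) + 1) ω) ∈ A} ∩
         {ω | (fun j : Fin (n - k) => tilXi ξ Prod.snd ((j : ℕ) + 1) ω) ∈ B} ∩
         {ω | horizSteps ξ n ω = k})
        = P {ω | (fun j : Fin k => tilXi ξ Prod.fst ((j : ℕ) + 1) ω) ∈ A} *
          P {ω | (fun j : Fin (n - k) => tilXi ξ Prod.snd ((j : ℕ) + 1) ω) ∈ B} *
          P {ω | horizSteps ξ n ω = k} := by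
  subst hh₁ hh₂
  have hGn : P (Gset ξ n)ᶜ = 0 :=
    null_GsetC hmeas hsum hp₁ hq₁ hp₂ hq₂ hd₁ hd₂ hd₃ hd₄ n
  have h1pos : (0 : ℝ) < p₁ + q₁ := by linarith
  have h2pos : (0 : ℝ) < p₂ + q₂ := by linarith
  have hIle : I ≤ k := by
    rw [hI]
    exact (Finset.card_filter_le _ _).trans (by rw [Finset.card_univ, Fintype.card_fin])
  have hJle : J ≤ n - k := by
    rw [hJ]
    exact (Finset.card_filter_le _ _).trans (by rw [Finset.card_univ, Fintype.card_fin])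
  constructor
  · -- Part 1
    have hev : {ω | (∀ j : Fin k, tilXi ξ Prod.fst ((j : ℕ) + 1) ω = ε j) ∧
           (∀ j : Fin (n - k), tilXi ξ Prod.snd ((j : ℕ) + 1) ω = η j) ∧
           horizSteps ξ n ω = k}
        = {ω | (fun j : Fin k => tilXi ξ Prod.fst ((j : ℕ) + 1) ω)
              ∈ ({ε} : Finset (Fin k → ℤ)) ∧
            (fun j : Fin (n - k) => tilXi ξ Prod.snd ((j : ℕ) + 1) ω)
              ∈ ({η} : Finset (Fin (n - k) → ℤ)) ∧
            horizSteps ξ n ω = k} := by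
      ext ω
      simp only [Set.mem_setOf_eq, Finset.mem_singleton, funext_iff]
    rw [hev, ← inter_conull (X := {ω | (fun j : Fin k => tilXi ξ Prod.fst ((j : ℕ) + 1) ω)
        ∈ ({ε} : Finset (Fin k → ℤ)) ∧
      (fun j : Fin (n - k) => tilXi ξ Prod.snd ((j : ℕ) + 1) ω)
        ∈ ({η} : Finset (Fin (n - k) → ℤ)) ∧
      horizSteps ξ n ω = k}) hGn]
    rw [core_prob hmeas hindep hp₁ hq₁ hp₂ hq₂ hd₁ hd₂ hd₃ hd₄ n k hk
      ({ε} : Finset (Fin k → ℤ))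
      (fun e he => by rw [Finset.mem_singleton] at he; subst he; exact hε)
      ({η} : Finset (Fin (n - k) → ℤ))
      (fun f hf => by rw [Finset.mem_singleton] at hf; subst hf; exact hη)]
    rw [Finset.sum_singleton, Finset.sum_singleton]
    congr 1
    have hcA : (∏ i, if ε i = 1 then p₁ else q₁) = p₁ ^ I * q₁ ^ (k - I) := by
      rw [Finset.prod_ite (fun _ => p₁) (fun _ => q₁), Finset.prod_const, Finset.prod_const]
      have h2 := Finset.card_filter_add_card_filter_not
        (s := (univ : Finset (Fin k))) (p := fun i => ε i = 1)
      rw [Finset.card_univ, Fintype.card_fin] at h2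
      rw [hI]
      have h3 : (univ.filter (fun x => ¬ ε x = 1)).card
          = k - (univ.filter (fun j => ε j = 1)).card := by omega
      rw [h3]
    have hcB : (∏ i, if η i = 1 then p₂ else q₂) = p₂ ^ J * q₂ ^ (n - k - J) := by
      rw [Finset.prod_ite (fun _ => p₂) (fun _ => q₂), Finset.prod_const, Finset.prod_const]
      have h2 := Finset.card_filter_add_card_filter_not
        (s := (univ : Finset (Fin (n - k)))) (p := fun i => η i = 1)
      rw [Finset.card_univ, Fintype.card_fin] at h2
      rw [hJ]
      have h3 : (univ.filter (fun x => ¬ η x = 1)).card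
          = (n - k) - (univ.filter (fun j => η j = 1)).card := by omega
      rw [h3]
    rw [hcA, hcB]
    rw [div_pow, div_pow, div_pow, div_pow]
    rw [show (p₁ + q₁) ^ k = (p₁ + q₁) ^ I * (p₁ + q₁) ^ (k - I) by
      rw [← pow_add]; congr 1; omega]
    rw [show (p₂ + q₂) ^ (n - k) = (p₂ + q₂) ^ J * (p₂ + q₂) ^ (n - k - J) by
      rw [← pow_add]; congr 1; omega]
    field_simp
  · -- Part 2
    intro A B
    have hTriple : P ({ω | (fun j : Fin k => tilXi ξ Prod.fst ((j : ℕ) + 1) ω) ∈ A} ∩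
         {ω | (fun j : Fin (n - k) => tilXi ξ Prod.snd ((j : ℕ) + 1) ω) ∈ B} ∩
         {ω | horizSteps ξ n ω = k})
        = ENNReal.ofReal ((∑ e ∈ SAfin k A, ∏ i, if e i = 1 then p₁ else q₁) *
            (∑ f ∈ SAfin (n - k) B, ∏ i, if f i = 1 then p₂ else q₂) * (n.choose k)) := by
      rw [← inter_conull (X := {ω | (fun j : Fin k => tilXi ξ Prod.fst ((j : ℕ) + 1) ω) ∈ A} ∩
         {ω | (fun j : Fin (n - k) => tilXi ξ Prod.snd ((j : ℕ) + 1) ω) ∈ B} ∩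
         {ω | horizSteps ξ n ω = k}) hGn]
      have hseteq : ({ω | (fun j : Fin k => tilXi ξ Prod.fst ((j : ℕ) + 1) ω) ∈ A} ∩
         {ω | (fun j : Fin (n - k) => tilXi ξ Prod.snd ((j : ℕ) + 1) ω) ∈ B} ∩
         {ω | horizSteps ξ n ω = k}) ∩ Gset ξ n
          = {ω | (fun j : Fin k => tilXi ξ Prod.fst ((j : ℕ) + 1) ω) ∈ SAfin k A ∧
              (fun j : Fin (n - k) => tilXi ξ Prod.snd ((j : ℕ) + 1) ω) ∈ SAfin (n - k) B ∧
              horizSteps ξ n ω = k} ∩ Gset ξ n := by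
        ext ω
        simp only [Set.mem_inter_iff, Set.mem_setOf_eq]
        constructor
        · rintro ⟨⟨⟨hA, hB⟩, hH⟩, hG⟩
          obtain ⟨hs1, hs2⟩ := sign_mem hG hH
          exact ⟨⟨mem_SAfin.2 ⟨hs1, hA⟩, mem_SAfin.2 ⟨hs2, hB⟩, hH⟩, hG⟩
        · rintro ⟨⟨hA, hB, hH⟩, hG⟩
          exact ⟨⟨⟨(mem_SAfin.1 hA).2, (mem_SAfin.1 hB).2⟩, hH⟩, hG⟩
      rw [hseteq]
      exact core_prob hmeas hindep hp₁ hq₁ hp₂ hq₂ hd₁ hd₂ hd₃ hd₄ n k hk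
        (SAfin k A) (fun e he => (mem_SAfin.1 he).1)
        (SAfin (n - k) B) (fun f hf => (mem_SAfin.1 hf).1)
    have hPH : P {ω | horizSteps ξ n ω = k}
        = ENNReal.ofReal ((p₁ + q₁) ^ k * (p₂ + q₂) ^ (n - k) * (n.choose k)) := by
      rw [← inter_conull (X := {ω | horizSteps ξ n ω = k}) hGn]
      have hseteq : ({ω : Ω | horizSteps ξ n ω = k}) ∩ Gset ξ n
          = {ω | (fun j : Fin k => tilXi ξ Prod.fst ((j : ℕ) + 1) ω) ∈ SAfin k Set.univ ∧
              (fun j : Fin (n - k) => tilXi ξ Prod.snd ((j : ℕ) + 1) ω)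
                ∈ SAfin (n - k) Set.univ ∧
              horizSteps ξ n ω = k} ∩ Gset ξ n := by
        ext ω
        simp only [Set.mem_inter_iff, Set.mem_setOf_eq]
        constructor
        · rintro ⟨hH, hG⟩
          obtain ⟨hs1, hs2⟩ := sign_mem hG hH
          exact ⟨⟨mem_SAfin.2 ⟨hs1, trivial⟩, mem_SAfin.2 ⟨hs2, trivial⟩, hH⟩, hG⟩
        · rintro ⟨⟨_, _, hH⟩, hG⟩
          exact ⟨hH, hG⟩
      rw [hseteq]
      rw [core_prob hmeas hindep hp₁ hq₁ hp₂ hq₂ hd₁ hd₂ hd₃ hd₄ n k hk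
        (SAfin k Set.univ) (fun e he => (mem_SAfin.1 he).1)
        (SAfin (n - k) Set.univ) (fun f hf => (mem_SAfin.1 hf).1)]
      rw [sum_univ_cA p₁ q₁ k, sum_univ_cA p₂ q₂ (n - k)]
    have hP1 := marginal hmeas hindep hsum hp₁ hq₁ hp₂ hq₂ hd₁ hd₂ hd₃ hd₄ k A
    have hP2 := marginal_snd hmeas hindep hsum hp₁ hq₁ hp₂ hq₂ hd₁ hd₂ hd₃ hd₄ (n - k) B
    rw [hTriple, hP1, hP2, hPH]
    have hnn1 : (0 : ℝ) ≤ ∑ e ∈ SAfin k A, ∏ i,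
        if e i = 1 then p₁ / (p₁ + q₁) else q₁ / (p₁ + q₁) := by
      refine Finset.sum_nonneg fun e _ => Finset.prod_nonneg fun i _ => ?_
      split_ifs <;> positivity
    have hnn2 : (0 : ℝ) ≤ (∑ e ∈ SAfin k A, ∏ i,
        if e i = 1 then p₁ / (p₁ + q₁) else q₁ / (p₁ + q₁)) *
        (∑ e ∈ SAfin (n - k) B, ∏ i,
          if e i = 1 then p₂ / (p₂ + q₂) else q₂ / (p₂ + q₂)) := by
      refine mul_nonneg hnn1 ?_
      refine Finset.sum_nonneg fun e _ => Finset.prod_nonneg fun i _ => ?_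
      split_ifs <;> positivity
    rw [← ENNReal.ofReal_mul hnn1, ← ENNReal.ofReal_mul hnn2]
    congr 1
    rw [sum_norm_fact (SAfin k A) p₁ q₁ (ne_of_gt h1pos),
      sum_norm_fact (SAfin (n - k) B) p₂ q₂ (ne_of_gt h2pos)]
    ring

end
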